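/- arXiv:1308.2737 — 5 statements merged into one kernel-verified Lean document; each statement's English description precedes it below -/
import Mathlib

section
/- Let φ(z) = (z-α₁)(z-α₂)/(6z²) with |α₁| > 1 > |α₂| > 0, let d ≥ 0, and let E(z) be a rational function bounded and holomorphic on {|z| ≥ 1}. Define ψ(z) = 6z²(z^{-d} - E(z))/((z-α₁)(z-α₂)). Then all poles of ψ lie in the open unit disc if and only if E(α₁) = α₁^{-d}. -/
/-- Stability characterization of the inverse filter: with
`φ(z) = (z-α₁)(z-α₂)/(6z²)`, `|α₁| > 1 > |α₂| > 0`, `d ≥ 0`, and a rational `E`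
bounded and holomorphic on `{|z| ≥ 1}`, the filter
`ψ(z) = 6z²(z^{-d} - E(z))/((z-α₁)(z-α₂))` has all its poles in the open unit disc
(i.e. it agrees off `α₁` with a function holomorphic on `{|z| ≥ 1}`) if and only if
`E(α₁) = α₁^{-d}`. -/
theorem stmt12 (α₁ α₂ : ℂ) (h1 : 1 < ‖α₁‖) (h2 : ‖α₂‖ < 1)
    (h2' : 0 < ‖α₂‖) (d : ℕ) (E : ℂ → ℂ)
    (hE : DifferentiableOn ℂ E {z : ℂ | 1 ≤ ‖z‖})
    (hbdd : ∃ M : ℝ, ∀ z : ℂ, 1 ≤ ‖z‖ → ‖E z‖ ≤ M)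
    (hrat : ∃ p q : Polynomial ℂ, q ≠ 0 ∧
      ∀ z : ℂ, q.eval z ≠ 0 → E z = p.eval z / q.eval z) :
    (∃ ψ' : ℂ → ℂ, DifferentiableOn ℂ ψ' {z : ℂ | 1 ≤ ‖z‖} ∧
        ∀ z : ℂ, 1 ≤ ‖z‖ → z ≠ α₁ →
          ψ' z = 6 * z ^ 2 * (z ^ (-(d : ℤ)) - E z) / ((z - α₁) * (z - α₂)))
      ↔ E α₁ = α₁ ^ (-(d : ℤ)) := by
  set S : Set ℂ := {z : ℂ | 1 ≤ ‖z‖} with hS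
  have hUopen : IsOpen {z : ℂ | 1 < ‖z‖} :=
    isOpen_lt continuous_const continuous_norm
  have hUsub : {z : ℂ | 1 < ‖z‖} ⊆ S := fun z hz => show (1:ℝ) ≤ ‖z‖ from le_of_lt hz
  have hSnhds : ∀ z : ℂ, 1 < ‖z‖ → S ∈ nhds z := fun z hz =>
    Filter.mem_of_superset (hUopen.mem_nhds hz) hUsub
  have hzne0 : ∀ z : ℂ, z ∈ S → z ≠ 0 := by
    intro z hz h0
    rw [h0] at hz
    simp only [hS, Set.mem_setOf_eq, map_zero, norm_zero] at hz
    linarith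
  have hzneα₂ : ∀ z : ℂ, z ∈ S → z ≠ α₂ := by
    intro z hz h0
    rw [h0] at hz
    simp only [hS, Set.mem_setOf_eq] at hz
    linarith
  have hα₁S : α₁ ∈ S := show (1:ℝ) ≤ ‖α₁‖ from le_of_lt h1
  have hα₁0 : α₁ ≠ 0 := hzne0 α₁ hα₁S
  set h : ℂ → ℂ := fun z => z ^ (-(d : ℤ)) - E z with hh_def
  have hh : DifferentiableOn ℂ h S := by
    intro z hz
    exact ((differentiableAt_zpow.mpr (Or.inl (hzne0 z hz))).differentiableWithinAt).sub
      (hE z hz)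
  constructor
  · rintro ⟨ψ', hψ', heq⟩
    have hψ'at : DifferentiableAt ℂ ψ' α₁ := (hψ' α₁ hα₁S).differentiableAt (hSnhds α₁ h1)
    have hEat : DifferentiableAt ℂ E α₁ := (hE α₁ hα₁S).differentiableAt (hSnhds α₁ h1)
    set g : ℂ → ℂ := fun z => 6 * z ^ 2 * h z / (z - α₂) with hg_def
    have hgc : ContinuousAt g α₁ := by
      apply ContinuousAt.div
      · exact ((continuous_const.mul (continuous_pow 2)).continuousAt).mul
          (((differentiableAt_zpow.mpr (Or.inl hα₁0)).continuousAt).sub hEat.continuousAt)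
      · exact continuousAt_id.sub continuousAt_const
      · exact sub_ne_zero.mpr (hzneα₂ α₁ hα₁S)
    have T1 : Filter.Tendsto (fun z => (z - α₁) * ψ' z) (nhdsWithin α₁ {α₁}ᶜ) (nhds 0) := by
      have : ContinuousAt (fun z => (z - α₁) * ψ' z) α₁ :=
        (continuousAt_id.sub continuousAt_const).mul hψ'at.continuousAt
      have h0 : ((α₁ - α₁) * ψ' α₁) = 0 := by ring
      exact h0 ▸ this.tendsto.mono_left nhdsWithin_le_nhds
    have T2 : (fun z => (z - α₁) * ψ' z) =ᶠ[nhdsWithin α₁ {α₁}ᶜ] g := by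
      filter_upwards [self_mem_nhdsWithin,
        nhdsWithin_le_nhds (hUopen.mem_nhds h1)] with z hz1 hz2
      have hzne : z ≠ α₁ := hz1
      have hzS : z ∈ S := hUsub hz2
      rw [heq z hzS hzne]
      have h1' : z - α₁ ≠ 0 := sub_ne_zero.mpr hzne
      have h2' : z - α₂ ≠ 0 := sub_ne_zero.mpr (hzneα₂ z hzS)
      rw [mul_div_assoc', mul_div_mul_left _ _ h1']
    have T3 : Filter.Tendsto g (nhdsWithin α₁ {α₁}ᶜ) (nhds (g α₁)) :=
      hgc.tendsto.mono_left nhdsWithin_le_nhds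
    have hg0 : g α₁ = 0 := tendsto_nhds_unique T3 (T1.congr' T2)
    have hα₁2 : (6 : ℂ) * α₁ ^ 2 ≠ 0 := by
      simp [pow_eq_zero_iff, hα₁0]
    have hsub : α₁ - α₂ ≠ 0 := sub_ne_zero.mpr (hzneα₂ α₁ hα₁S)
    rw [hg_def] at hg0
    simp only [div_eq_zero_iff, mul_eq_zero, sub_eq_zero, hsub, or_false] at hg0
    rcases hg0 with h' | h'
    · rcases h' with h' | h'
      · norm_num at h'
      · exact absurd h' (pow_ne_zero 2 hα₁0)
    · exact (sub_eq_zero.mp h').symm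
  · intro hEα
    have hhα₁ : h α₁ = 0 := by simp [hh_def, hEα]
    refine ⟨fun z => 6 * z ^ 2 * dslope h α₁ z / (z - α₂), ?_, ?_⟩
    · intro z hz
      have hzα₂ : z - α₂ ≠ 0 := sub_ne_zero.mpr (hzneα₂ z hz)
      by_cases hzα₁ : z = α₁
      · subst hzα₁
        have hanalytic : AnalyticAt ℂ h z := by
          have : DifferentiableOn ℂ h {w : ℂ | 1 < ‖w‖} :=
            hh.mono hUsub
          exact this.analyticAt (hUopen.mem_nhds h1)
        obtain ⟨p, hp⟩ := hanalytic
        have hd : AnalyticAt ℂ (dslope h z) z :=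
          ⟨p.fslope, hp.has_fpower_series_dslope_fslope⟩
        exact ((((differentiable_const (6:ℂ)).mul (differentiable_pow 2)).differentiableAt.mul
          hd.differentiableAt).div
          ((differentiable_id.sub (differentiable_const _)).differentiableAt)
          hzα₂).differentiableWithinAt
      · exact (((((differentiable_const (6:ℂ)).mul
          (differentiable_pow 2)) z).differentiableWithinAt.mul
          ((differentiableWithinAt_dslope_of_ne hzα₁).mpr (hh z hz))).div
          (((differentiable_id.sub (differentiable_const _)) z).differentiableWithinAt)
          hzα₂)
    · intro z hz hzα₁
      have hds : dslope h α₁ z = h z / (z - α₁) := by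
        rw [dslope_of_ne h hzα₁, slope_def_field, hhα₁, sub_zero]
      show 6 * z ^ 2 * dslope h α₁ z / (z - α₂) = 6 * z ^ 2 * h z / ((z - α₁) * (z - α₂))
      rw [hds, mul_div_assoc', div_div]
end

section
/- Let φ: ℝ → ℝ generate a Riesz basis: there exist constants 0 < a ≤ b such that for every c ∈ ℓ²(ℤ₊), a‖c‖_{ℓ²} ≤ ‖∑_{n≥0} c(n) φ(·-n)‖_{L²} ≤ b‖c‖_{ℓ²}. Let ψ, φ_s ∈ ℓ¹(ℤ₊) be causal sequences and d ≥ 0 an integer. Suppose x(t) = ∑_{n≥0} c(n) φ(t-n) with c ∈ ℓ², c(n) = 0 for n < 0, and x(m) = (φ_s ∗ c)(m) for all integers m. Define y(t) = ∑_{n≥0} (ψ ∗ x|_ℤ)(n) φ(t-n), where x|_ℤ denotes the sampled sequence. Then ‖x(·-d) - y‖_{L²} ≤ (b/a) · ‖z^{-d} - ψ(z)φ_s(z)‖_{H^∞} · ‖x‖_{L²}. -/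
open MeasureTheory

/-- ℓ² norm of a causal (one-sided) real sequence. -/
noncomputable def l2norm (c : ℕ → ℝ) : ℝ := Real.sqrt (∑' n : ℕ, (c n) ^ 2)

/-- L² norm of a real signal on `ℝ₊ = [0, ∞)`. -/
noncomputable def L2norm (f : ℝ → ℝ) : ℝ := Real.sqrt (∫ t in Set.Ici (0 : ℝ), (f t) ^ 2)

/-- Convolution of causal sequences: `(e ∗ c)(n) = ∑_{k=0}^{n} e(n-k) c(k)`. -/
def cconv (e c : ℕ → ℝ) (n : ℕ) : ℝ := ∑ k ∈ Finset.range (n + 1), e (n - k) * c k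

/-- Z-transform of a causal sequence, evaluated at `w`: `ê(w) = ∑_{n≥0} e(n) w⁻ⁿ`. -/
noncomputable def Ztrans (e : ℕ → ℝ) (w : ℂ) : ℂ := ∑' n : ℕ, (e n : ℂ) * w⁻¹ ^ n

/-- `H^∞` norm of a causal sequence: sup of `|ê(e^{iθ})|` over the unit circle. -/
noncomputable def HinfNorm (e : ℕ → ℝ) : ℝ :=
  ⨆ θ : ℝ, ‖Ztrans e (Complex.exp (θ * Complex.I))‖

/-- The `d`-step delay sequence, i.e. the impulse response of `z^{-d}`. -/
def delaySeq (d : ℕ) (n : ℕ) : ℝ := if n = d then 1 else 0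
section SeqAlgebra

lemma cconv_comm_form (e c : ℕ → ℝ) (n : ℕ) :
    cconv e c n = ∑ k ∈ Finset.range (n + 1), e k * c (n - k) := by
  unfold cconv
  rw [← Finset.sum_range_reflect]
  refine Finset.sum_congr rfl fun j hj => ?_
  rw [Finset.mem_range] at hj
  congr 2
  all_goals omega

lemma cconv_eq_coeff (e c : ℕ → ℝ) (n : ℕ) :
    cconv e c n = PowerSeries.coeff n (PowerSeries.mk e * PowerSeries.mk c) := by
  rw [PowerSeries.coeff_mul, Finset.Nat.sum_antidiagonal_eq_sum_range_succ_mk,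
    cconv_comm_form]
  simp

lemma cconv_assoc (e f c : ℕ → ℝ) : cconv e (cconv f c) = cconv (cconv e f) c := by
  funext n
  have h1 : PowerSeries.mk (cconv f c) = PowerSeries.mk f * PowerSeries.mk c := by
    ext m; simp [cconv_eq_coeff]
  have h2 : PowerSeries.mk (cconv e f) = PowerSeries.mk e * PowerSeries.mk f := by
    ext m; simp [cconv_eq_coeff]
  rw [cconv_eq_coeff, cconv_eq_coeff, h1, h2, mul_assoc]

lemma cconv_sub (e f c : ℕ → ℝ) (n : ℕ) :
    cconv (fun k => e k - f k) c n = cconv e c n - cconv f c n := by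
  unfold cconv
  rw [← Finset.sum_sub_distrib]
  exact Finset.sum_congr rfl fun k _ => by ring

lemma cconv_delay (d : ℕ) (c : ℕ → ℝ) (n : ℕ) :
    cconv (delaySeq d) c n = if d ≤ n then c (n - d) else 0 := by
  unfold cconv delaySeq
  by_cases h : d ≤ n
  · rw [if_pos h]
    rw [Finset.sum_eq_single (n - d)]
    · rw [if_pos (by omega), one_mul]
    · intro k hk hne
      rw [Finset.mem_range] at hk
      rw [if_neg (by omega), zero_mul]
    · intro h'; exact absurd (Finset.mem_range.mpr (by omega)) h'
  · rw [if_neg h]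
    apply Finset.sum_eq_zero
    intro k hk
    rw [Finset.mem_range] at hk
    rw [if_neg (by omega), zero_mul]

lemma cconv_l1 {e c : ℕ → ℝ} (he : Summable fun n => |e n|) (hc : Summable fun n => |c n|) :
    Summable fun n => |cconv e c n| := by
  have := summable_norm_sum_mul_antidiagonal_of_summable_norm (f := e) (g := c)
    (by simpa using he) (by simpa using hc)
  simpa [Finset.Nat.sum_antidiagonal_eq_sum_range_succ_mk, ← cconv_comm_form] using this

end SeqAlgebra

section Fourier
open Complex Polynomial

noncomputable def fexp (k : ℕ) (θ : ℝ) : ℂ := Complex.exp (-((k : ℂ) * (θ : ℂ)) * Complex.I)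

lemma fexp_cont (k : ℕ) : Continuous (fexp k) := by
  unfold fexp; fun_prop

lemma conj_fexp (k : ℕ) (θ : ℝ) :
    (starRingEnd ℂ) (fexp k θ) = Complex.exp (((k : ℂ) * (θ : ℂ)) * Complex.I) := by
  rw [fexp, ← Complex.exp_conj]
  congr 1
  simp [map_mul]

lemma fexp_eq_pow (k : ℕ) (θ : ℝ) :
    fexp k θ = (Complex.exp (-(θ:ℂ) * Complex.I)) ^ k := by
  rw [fexp, ← Complex.exp_nat_mul]; congr 1; ring

lemma abs_z (θ : ℝ) : ‖Complex.exp (-(θ:ℂ) * Complex.I)‖ = 1 := by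
  rw [Complex.norm_exp]; norm_num [Complex.mul_re]

lemma orth (m n : ℕ) :
    ∫ θ in (0:ℝ)..(2*Real.pi), fexp m θ * (starRingEnd ℂ) (fexp n θ)
      = if m = n then (2*Real.pi : ℂ) else 0 := by
  have key : ∀ θ : ℝ, fexp m θ * (starRingEnd ℂ) (fexp n θ)
      = Complex.exp ((((n:ℤ) - (m:ℤ) : ℤ) : ℂ) * Complex.I * (θ:ℂ)) := by
    intro θ
    rw [conj_fexp, fexp, ← Complex.exp_add]
    congr 1
    push_cast
    ring
  simp only [key]
  by_cases h : m = n
  · subst h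
    simp only [sub_self, Int.cast_zero, zero_mul, Complex.exp_zero]
    simp
  · rw [if_neg h]
    have hc : (((n:ℤ) - (m:ℤ) : ℤ) : ℂ) * Complex.I ≠ 0 := by
      simp only [ne_eq, mul_eq_zero, Complex.I_ne_zero, or_false, Int.cast_eq_zero,
        sub_eq_zero]
      exact_mod_cast fun hh => h (by exact_mod_cast hh.symm)
    rw [integral_exp_mul_complex hc]
    have h1 : Complex.exp ((((n:ℤ) - (m:ℤ) : ℤ) : ℂ) * Complex.I * ((2*Real.pi : ℝ) : ℂ)) = 1 := by
      have := Complex.exp_int_mul_two_pi_mul_I ((n:ℤ) - (m:ℤ))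
      rw [← this]
      congr 1
      push_cast
      ring
    rw [h1]
    simp

noncomputable def trigP (u : ℕ → ℝ) (N : ℕ) (θ : ℝ) : ℂ :=
  ∑ k ∈ Finset.range N, (u k : ℂ) * fexp k θ

lemma trigP_cont (u : ℕ → ℝ) (N : ℕ) : Continuous (trigP u N) := by
  unfold trigP
  exact continuous_finset_sum _ fun k _ => continuous_const.mul (fexp_cont k)

lemma parseval_fin (u : ℕ → ℝ) (N : ℕ) :
    ∫ θ in (0:ℝ)..(2*Real.pi), Complex.normSq (trigP u N θ)
      = 2*Real.pi * ∑ k ∈ Finset.range N, (u k)^2 := by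
  have expand : ∀ θ : ℝ, ((Complex.normSq (trigP u N θ) : ℝ) : ℂ)
      = ∑ m ∈ Finset.range N, ∑ n ∈ Finset.range N,
         ((u m : ℂ) * (u n : ℂ)) * (fexp m θ * (starRingEnd ℂ) (fexp n θ)) := by
    intro θ
    rw [← Complex.mul_conj]
    unfold trigP
    rw [map_sum, Finset.sum_mul_sum]
    refine Finset.sum_congr rfl fun m _ => Finset.sum_congr rfl fun n _ => ?_
    rw [map_mul]
    simp only [Complex.conj_ofReal]
    ring
  have intgr : ∀ (f : ℝ → ℂ), Continuous f → IntervalIntegrable f MeasureTheory.volume 0 (2*Real.pi) :=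
    fun f hf => hf.intervalIntegrable _ _
  have lhs_c : ((∫ θ in (0:ℝ)..(2*Real.pi), Complex.normSq (trigP u N θ) : ℝ) : ℂ)
      = ∫ θ in (0:ℝ)..(2*Real.pi), ((Complex.normSq (trigP u N θ) : ℝ) : ℂ) := by
    rw [intervalIntegral.integral_ofReal]
  have : (∫ θ in (0:ℝ)..(2*Real.pi), ((Complex.normSq (trigP u N θ) : ℝ) : ℂ))
      = ∑ m ∈ Finset.range N, ∑ n ∈ Finset.range N,
          ((u m : ℂ) * (u n : ℂ)) * (if m = n then (2*Real.pi : ℂ) else 0) := by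
    rw [intervalIntegral.integral_congr (g := fun θ => ∑ m ∈ Finset.range N, ∑ n ∈ Finset.range N,
         ((u m : ℂ) * (u n : ℂ)) * (fexp m θ * (starRingEnd ℂ) (fexp n θ)))
        (fun θ _ => expand θ)]
    rw [intervalIntegral.integral_finset_sum (fun m _ => intgr _ (by
        exact continuous_finset_sum _ fun n _ => (continuous_const.mul ((fexp_cont m).mul
          (Complex.continuous_conj.comp (fexp_cont n))))))]
    refine Finset.sum_congr rfl fun m _ => ?_
    rw [intervalIntegral.integral_finset_sum (fun n _ => intgr _ (by
        exact continuous_const.mul ((fexp_cont m).mul (Complex.continuous_conj.comp (fexp_cont n)))))]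
    refine Finset.sum_congr rfl fun n _ => ?_
    rw [intervalIntegral.integral_const_mul, orth]
  have rhs : (∑ m ∈ Finset.range N, ∑ n ∈ Finset.range N,
          ((u m : ℂ) * (u n : ℂ)) * (if m = n then (2*Real.pi : ℂ) else 0))
      = ((2*Real.pi * ∑ k ∈ Finset.range N, (u k)^2 : ℝ) : ℂ) := by
    rw [Finset.sum_congr rfl (fun m hm => Finset.sum_eq_single m
      (fun n _ hne => by rw [if_neg (Ne.symm hne), mul_zero])
      (fun h => absurd hm h))]
    push_cast
    rw [Finset.mul_sum]
    refine Finset.sum_congr rfl fun m _ => ?_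
    rw [if_pos rfl]
    ring
  have := lhs_c.trans (this.trans rhs)
  exact_mod_cast this

noncomputable def upoly (u : ℕ → ℝ) (M : ℕ) : Polynomial ℂ :=
  ∑ k ∈ Finset.range M, Polynomial.C (u k : ℂ) * Polynomial.X ^ k

lemma upoly_coeff (u : ℕ → ℝ) (M : ℕ) (hu : ∀ k, M ≤ k → u k = 0) (j : ℕ) :
    (upoly u M).coeff j = (u j : ℂ) := by
  rw [upoly, Polynomial.finset_sum_coeff]
  simp only [Polynomial.coeff_C_mul, Polynomial.coeff_X_pow]
  rw [Finset.sum_congr rfl (fun k _ => by rw [mul_ite, mul_one, mul_zero]),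
    Finset.sum_ite_eq (Finset.range M) j (fun k => (u k : ℂ))]
  by_cases h : j ∈ Finset.range M
  · rw [if_pos h]
  · rw [if_neg h, hu j (by simpa using h)]
    simp

lemma upoly_natDegree (u : ℕ → ℝ) (M : ℕ) : (upoly u M).natDegree ≤ M - 1 := by
  apply Polynomial.natDegree_sum_le_of_forall_le
  intro k hk
  exact (Polynomial.natDegree_C_mul_X_pow_le _ _).trans (by
    rw [Finset.mem_range] at hk; omega)

lemma upoly_eval (u : ℕ → ℝ) (M N : ℕ) (hu : ∀ k, M ≤ k → u k = 0) (hMN : M ≤ N) (z : ℂ) :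
    (upoly u M).eval z = ∑ k ∈ Finset.range N, (u k : ℂ) * z ^ k := by
  rw [upoly, Polynomial.eval_finset_sum]
  simp only [Polynomial.eval_mul, Polynomial.eval_C, Polynomial.eval_pow, Polynomial.eval_X]
  apply Finset.sum_subset (Finset.range_subset_range.mpr hMN)
  intro k _ hk
  rw [hu k (by simpa using hk)]
  simp

lemma trigP_eq_eval (u : ℕ → ℝ) (M N : ℕ) (hu : ∀ k, M ≤ k → u k = 0) (hMN : M ≤ N) (θ : ℝ) :
    trigP u N θ = (upoly u M).eval (Complex.exp (-(θ:ℂ) * Complex.I)) := by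
  rw [upoly_eval u M N hu hMN, trigP]
  exact Finset.sum_congr rfl fun k _ => by rw [fexp_eq_pow]

lemma cauchyProductFin (f g : ℕ → ℝ) (M : ℕ) (hM : 1 ≤ M)
    (hf : ∀ k, M ≤ k → f k = 0) (hg : ∀ k, M ≤ k → g k = 0) (θ : ℝ) :
    trigP (cconv f g) (2*M) θ = trigP f (2*M) θ * trigP g (2*M) θ := by
  set z := Complex.exp (-(θ:ℂ) * Complex.I) with hz
  have hcoeff : ∀ j, (upoly f M * upoly g M).coeff j = ((cconv f g j : ℝ) : ℂ) := by
    intro j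
    rw [Polynomial.coeff_mul, Finset.Nat.sum_antidiagonal_eq_sum_range_succ_mk,
      cconv_comm_form]
    push_cast
    exact Finset.sum_congr rfl fun k _ => by
      rw [upoly_coeff f M hf, upoly_coeff g M hg]
  have hdeg : (upoly f M * upoly g M).natDegree < 2*M := by
    calc (upoly f M * upoly g M).natDegree ≤ (upoly f M).natDegree + (upoly g M).natDegree :=
          Polynomial.natDegree_mul_le
    _ ≤ (M-1) + (M-1) := add_le_add (upoly_natDegree f M) (upoly_natDegree g M)
    _ < 2*M := by omega
  have h1 : trigP (cconv f g) (2*M) θ = (upoly f M * upoly g M).eval z := by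
    rw [Polynomial.eval_eq_sum_range' hdeg, trigP]
    refine Finset.sum_congr rfl fun k _ => ?_
    rw [hcoeff k, fexp_eq_pow, hz]
  rw [h1, Polynomial.eval_mul,
    trigP_eq_eval f M (2*M) hf (by omega), trigP_eq_eval g M (2*M) hg (by omega)]

lemma ztrans_eq (e : ℕ → ℝ) (θ : ℝ) :
    Ztrans e (Complex.exp ((θ:ℂ) * Complex.I))
      = ∑' n : ℕ, (e n : ℂ) * (Complex.exp (-(θ:ℂ) * Complex.I)) ^ n := by
  rw [Ztrans, ← Complex.exp_neg]
  congr 1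
  ext n
  congr 2
  ring

lemma summable_ec (e : ℕ → ℝ) (he : Summable fun n => |e n|) (θ : ℝ) :
    Summable (fun n => (e n : ℂ) * (Complex.exp (-(θ:ℂ) * Complex.I)) ^ n) := by
  apply Summable.of_norm
  have : ∀ n : ℕ, ‖(e n : ℂ) * (Complex.exp (-(θ:ℂ) * Complex.I)) ^ n‖ = |e n| := by
    intro n
    rw [norm_mul, norm_pow]
    simp only [abs_z, one_pow, mul_one, Complex.norm_real, Real.norm_eq_abs]
  rw [funext this]
  exact he

lemma abs_ztrans_le (e : ℕ → ℝ) (he : Summable fun n => |e n|) (θ : ℝ) :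
    ‖Ztrans e (Complex.exp ((θ:ℂ) * Complex.I))‖ ≤ ∑' n, |e n| := by
  rw [ztrans_eq]
  refine le_trans (norm_tsum_le_tsum_norm ?_) ?_
  · have : ∀ n : ℕ, ‖(e n : ℂ) * (Complex.exp (-(θ:ℂ) * Complex.I)) ^ n‖ = |e n| := fun n => by
      rw [norm_mul, norm_pow]
      simp only [abs_z, one_pow, mul_one, Complex.norm_real, Real.norm_eq_abs]
    rw [funext this]; exact he
  · apply le_of_eq
    apply tsum_congr
    intro n
    rw [norm_mul, norm_pow]
    simp only [abs_z, one_pow, mul_one, Complex.norm_real, Real.norm_eq_abs]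

lemma hinf_bddAbove (e : ℕ → ℝ) (he : Summable fun n => |e n|) :
    BddAbove (Set.range fun θ : ℝ => ‖Ztrans e (Complex.exp ((θ:ℂ) * Complex.I))‖) := by
  refine ⟨∑' n, |e n|, ?_⟩
  rintro _ ⟨θ, rfl⟩
  exact abs_ztrans_le e he θ

lemma hinf_nonneg (e : ℕ → ℝ) : 0 ≤ HinfNorm e :=
  Real.iSup_nonneg fun θ => norm_nonneg _

lemma abs_ztrans_le_hinf (e : ℕ → ℝ) (he : Summable fun n => |e n|) (θ : ℝ) :
    ‖Ztrans e (Complex.exp ((θ:ℂ) * Complex.I))‖ ≤ HinfNorm e :=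
  le_ciSup (hinf_bddAbove e he) θ

lemma trig_sup_bound (e : ℕ → ℝ) (he : Summable fun n => |e n|) (M : ℕ) (θ : ℝ) :
    ‖∑ k ∈ Finset.range M, (e k : ℂ) * fexp k θ‖
      ≤ HinfNorm e + ∑' k, |e (k + M)| := by
  have hsum := summable_ec e he θ
  have hsplit := Summable.sum_add_tsum_nat_add M hsum
  have hfin : (∑ k ∈ Finset.range M, (e k : ℂ) * fexp k θ)
      = Ztrans e (Complex.exp ((θ:ℂ) * Complex.I))
        - ∑' k, (e (k + M) : ℂ) * (Complex.exp (-(θ:ℂ) * Complex.I)) ^ (k + M) := by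
    rw [ztrans_eq, ← hsplit,
      Finset.sum_congr rfl fun k _ => by rw [fexp_eq_pow]]
    ring
  rw [hfin]
  refine le_trans (norm_sub_le _ _) (add_le_add
    (by exact abs_ztrans_le_hinf e he θ) ?_)
  refine le_trans (norm_tsum_le_tsum_norm ?_) ?_
  · have : ∀ k : ℕ, ‖(e (k + M) : ℂ) * (Complex.exp (-(θ:ℂ) * Complex.I)) ^ (k + M)‖
        = |e (k + M)| := fun k => by
      rw [norm_mul, norm_pow]
      simp only [abs_z, one_pow, mul_one, Complex.norm_real, Real.norm_eq_abs]
    rw [funext this]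
    exact (summable_nat_add_iff M).mpr he
  · apply le_of_eq
    apply tsum_congr
    intro k
    rw [norm_mul, norm_pow]
    simp only [abs_z, one_pow, mul_one, Complex.norm_real, Real.norm_eq_abs]

end Fourier
section StepD
open Filter Topology

lemma stepD (e c : ℕ → ℝ) (he : Summable fun n => |e n|)
    (hc : Summable fun n => (c n)^2) :
    Summable (fun n => (cconv e c n)^2) ∧
    (∑' n, (cconv e c n)^2) ≤ (HinfNorm e)^2 * ∑' n, (c n)^2 := by
  set H := HinfNorm e with hH
  set Sc := ∑' n, (c n)^2 with hSc
  have hSc0 : 0 ≤ Sc := tsum_nonneg fun n => sq_nonneg _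
  have h2pi : (0:ℝ) < 2*Real.pi := by positivity
  have key : ∀ M : ℕ, 1 ≤ M →
      ∑ n ∈ Finset.range M, (cconv e c n)^2 ≤ (H + ∑' k, |e (k + M)|)^2 * Sc := by
    intro M hM
    set f : ℕ → ℝ := fun k => if k < M then e k else 0 with hfdef
    set g : ℕ → ℝ := fun k => if k < M then c k else 0 with hgdef
    have hf : ∀ k, M ≤ k → f k = 0 := fun k hk => by simp [hfdef]; omega
    have hg : ∀ k, M ≤ k → g k = 0 := fun k hk => by simp [hgdef]; omega
    set S := H + ∑' k, |e (k + M)| with hS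
    have hS0 : 0 ≤ S := by
      rw [hS]
      exact add_nonneg (hinf_nonneg e) (tsum_nonneg fun k => abs_nonneg _)
    have hagree : ∀ n ∈ Finset.range M, (cconv e c n)^2 = (cconv f g n)^2 := by
      intro n hn
      rw [Finset.mem_range] at hn
      congr 1
      refine Finset.sum_congr rfl fun k hk => ?_
      rw [Finset.mem_range] at hk
      rw [hfdef, hgdef]
      simp only [if_pos (show n - k < M by omega), if_pos (show k < M by omega)]
    -- sup bound for trigP f
    have htrigf : ∀ θ : ℝ, trigP f (2*M) θ = ∑ k ∈ Finset.range M, (e k : ℂ) * fexp k θ := by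
      intro θ
      rw [trigP, ← Finset.sum_subset (Finset.range_subset_range.mpr (show M ≤ 2*M by omega))]
      · refine Finset.sum_congr rfl fun k hk => ?_
        rw [Finset.mem_range] at hk
        rw [hfdef]
        simp [hk]
      · intro k _ hk
        rw [Finset.mem_range] at hk
        rw [hf k (by omega)]
        simp
    have hptw : ∀ θ : ℝ, Complex.normSq (trigP (cconv f g) (2*M) θ)
        ≤ S^2 * Complex.normSq (trigP g (2*M) θ) := by
      intro θ
      rw [cauchyProductFin f g M hM hf hg θ, Complex.normSq_mul]
      apply mul_le_mul_of_nonneg_right _ (Complex.normSq_nonneg _)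
      rw [← Complex.sq_norm]
      have := trig_sup_bound e he M θ
      rw [← htrigf θ] at this
      exact pow_le_pow_left₀ (norm_nonneg _) this 2
    have hint : (2*Real.pi) * ∑ n ∈ Finset.range (2*M), (cconv f g n)^2
        ≤ (2*Real.pi) * (S^2 * Sc) := by
      rw [← parseval_fin (cconv f g) (2*M)]
      calc ∫ θ in (0:ℝ)..(2*Real.pi), Complex.normSq (trigP (cconv f g) (2*M) θ)
          ≤ ∫ θ in (0:ℝ)..(2*Real.pi), S^2 * Complex.normSq (trigP g (2*M) θ) := by
            apply intervalIntegral.integral_mono_on (le_of_lt h2pi)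
            · exact ((Complex.continuous_normSq.comp (trigP_cont _ _)).intervalIntegrable _ _)
            · exact ((continuous_const.mul (Complex.continuous_normSq.comp (trigP_cont _ _))).intervalIntegrable _ _)
            · exact fun θ _ => hptw θ
        _ = S^2 * (2*Real.pi * ∑ k ∈ Finset.range (2*M), (g k)^2) := by
            rw [intervalIntegral.integral_const_mul, parseval_fin]
        _ ≤ (2*Real.pi) * (S^2 * Sc) := by
            have hgsum : ∑ k ∈ Finset.range (2*M), (g k)^2 ≤ Sc := by
              have h1 : ∑ k ∈ Finset.range (2*M), (g k)^2
                  = ∑ k ∈ Finset.range (2*M), (if k < M then (c k)^2 else 0) := by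
                refine Finset.sum_congr rfl fun k _ => ?_
                by_cases h : k < M <;> simp [hgdef, h]
              rw [h1, ← Finset.sum_filter]
              have h2 : Finset.filter (fun k => k < M) (Finset.range (2*M)) ⊆ Finset.range M := by
                intro k hk
                simp only [Finset.mem_filter] at hk
                exact Finset.mem_range.mpr hk.2
              calc ∑ k ∈ Finset.filter (fun k => k < M) (Finset.range (2*M)), (c k)^2
                  ≤ ∑ k ∈ Finset.range M, (c k)^2 :=
                    Finset.sum_le_sum_of_subset_of_nonneg h2 (fun _ _ _ => sq_nonneg _)
                _ ≤ Sc := Summable.sum_le_tsum _ (fun _ _ => sq_nonneg _) hc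
            calc S^2 * (2*Real.pi * ∑ k ∈ Finset.range (2*M), (g k)^2)
                ≤ S^2 * (2*Real.pi * Sc) := by
                  apply mul_le_mul_of_nonneg_left _ (sq_nonneg S)
                  exact mul_le_mul_of_nonneg_left hgsum (le_of_lt h2pi)
              _ = (2*Real.pi) * (S^2 * Sc) := by ring
    have hMbound := le_of_mul_le_mul_left (le_trans (le_of_eq rfl) hint) h2pi
    calc ∑ n ∈ Finset.range M, (cconv e c n)^2
        = ∑ n ∈ Finset.range M, (cconv f g n)^2 := Finset.sum_congr rfl hagree
      _ ≤ ∑ n ∈ Finset.range (2*M), (cconv f g n)^2 :=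
          Finset.sum_le_sum_of_subset_of_nonneg
            (Finset.range_subset_range.mpr (by omega)) (fun _ _ _ => sq_nonneg _)
      _ ≤ S^2 * Sc := hMbound
  have key2 : ∀ M0 : ℕ, ∑ n ∈ Finset.range M0, (cconv e c n)^2 ≤ H^2 * Sc := by
    intro M0
    have hev : ∀ᶠ M in atTop, ∑ n ∈ Finset.range M0, (cconv e c n)^2
        ≤ (H + ∑' k, |e (k + M)|)^2 * Sc := by
      filter_upwards [eventually_ge_atTop (max M0 1)] with M hM
      refine le_trans ?_ (key M (le_trans (le_max_right _ _) hM))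
      exact Finset.sum_le_sum_of_subset_of_nonneg
        (Finset.range_subset_range.mpr (le_trans (le_max_left _ _) hM)) (fun _ _ _ => sq_nonneg _)
    have hlim : Tendsto (fun M : ℕ => (H + ∑' k, |e (k + M)|)^2 * Sc) atTop
        (nhds ((H + 0)^2 * Sc)) := by
      exact (((tendsto_const_nhds.add (tendsto_sum_nat_add (fun n => |e n|))).pow 2).mul
        tendsto_const_nhds)
    have := ge_of_tendsto hlim hev
    simpa using this
  have hsummable : Summable (fun n => (cconv e c n)^2) :=
    summable_of_sum_range_le (fun n => sq_nonneg _) key2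
  exact ⟨hsummable, Summable.tsum_le_of_sum_range_le hsummable key2⟩

end StepD
section MeasurePart
open MeasureTheory

lemma lint_shift (g : ℝ → ENNReal) (r : ℝ) (A : Set ℝ) (hA : MeasurableSet A) :
    ∫⁻ t in (fun u : ℝ => u - r) ⁻¹' A, g (t - r) = ∫⁻ s in A, g s := by
  have hemb : MeasurableEmbedding (fun u : ℝ => u - r) :=
    (MeasurableEquiv.subRight r).measurableEmbedding
  calc ∫⁻ t in (fun u : ℝ => u - r) ⁻¹' A, g (t - r)
      = ∫⁻ s, g s ∂(Measure.map (fun u : ℝ => u - r)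
          (volume.restrict ((fun u : ℝ => u - r) ⁻¹' A))) := (hemb.lintegral_map g).symm
    _ = ∫⁻ s, g s ∂((Measure.map (fun u : ℝ => u - r) volume).restrict A) := by
        rw [Measure.restrict_map hemb.measurable hA]
    _ = ∫⁻ s in A, g s := by rw [(measurePreserving_sub_right volume r).map_eq]

lemma phi_sq_summable_ae (φ : ℝ → ℝ) (b : ℝ)
    (hInt : ∀ n : ℕ, IntegrableOn (fun t => (φ (t - (n:ℝ)))^2) (Set.Ici (0:ℝ)))
    (hBnd : ∀ n : ℕ, ∫ t in Set.Ici (0:ℝ), (φ (t - (n:ℝ)))^2 ≤ b^2) :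
    ∀ᵐ t ∂(volume.restrict (Set.Ici (0:ℝ))), Summable (fun n : ℕ => (φ (t - (n:ℝ)))^2) := by
  have hlb : ∀ n : ℕ, ∫⁻ s in Set.Ici (-(n:ℝ)), ENNReal.ofReal ((φ s)^2)
      ≤ ENNReal.ofReal (b^2) := by
    intro n
    have hpre : (fun u : ℝ => u - (n:ℝ)) ⁻¹' Set.Ici (-(n:ℝ)) = Set.Ici (0:ℝ) := by
      ext t
      simp only [Set.mem_preimage, Set.mem_Ici]
      constructor <;> intro h <;> linarith
    have h1 := lint_shift (fun s => ENNReal.ofReal ((φ s)^2)) (n:ℝ)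
      (Set.Ici (-(n:ℝ))) measurableSet_Ici
    rw [hpre] at h1
    rw [← h1, ← ofReal_integral_eq_lintegral_ofReal (hInt n)
      (ae_of_all _ fun t => sq_nonneg _)]
    exact ENNReal.ofReal_le_ofReal (hBnd n)
  have main : ∀ k : ℕ, ∀ᵐ t ∂(volume.restrict (Set.Ico ((k:ℝ)) ((k:ℝ)+1))),
      Summable (fun n : ℕ => (φ (t - (n:ℝ)))^2) := by
    intro k
    have hsub : Set.Ico ((k:ℝ)) ((k:ℝ)+1) ⊆ Set.Ici (0:ℝ) := fun t ht =>
      le_trans (by positivity) ht.1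
    have hmeas : ∀ n : ℕ, AEMeasurable (fun t => ENNReal.ofReal ((φ (t - (n:ℝ)))^2))
        (volume.restrict (Set.Ico ((k:ℝ)) ((k:ℝ)+1))) := by
      intro n
      exact (((hInt n).aestronglyMeasurable.mono_measure
        (Measure.restrict_mono hsub le_rfl)).aemeasurable).ennreal_ofReal
    have hbound : (∫⁻ t in Set.Ico ((k:ℝ)) ((k:ℝ)+1),
        ∑' n : ℕ, ENNReal.ofReal ((φ (t - (n:ℝ)))^2)) ≤ ENNReal.ofReal (b^2) := by
      rw [lintegral_tsum hmeas]
      have hterm : ∀ n : ℕ, (∫⁻ t in Set.Ico ((k:ℝ)) ((k:ℝ)+1),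
          ENNReal.ofReal ((φ (t - (n:ℝ)))^2))
          = ∫⁻ s in Set.Ico ((k:ℝ) - n) ((k:ℝ)+1 - n), ENNReal.ofReal ((φ s)^2) := by
        intro n
        have hpre : (fun u : ℝ => u - (n:ℝ)) ⁻¹' Set.Ico ((k:ℝ) - n) ((k:ℝ)+1 - n)
            = Set.Ico ((k:ℝ)) ((k:ℝ)+1) := by
          ext t
          simp only [Set.mem_preimage, Set.mem_Ico]
          constructor <;> intro h <;> exact ⟨by linarith [h.1], by linarith [h.2]⟩
        have h2 := lint_shift (fun s => ENNReal.ofReal ((φ s)^2)) (n:ℝ)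
          (Set.Ico ((k:ℝ) - n) ((k:ℝ)+1 - n)) measurableSet_Ico
        rw [hpre] at h2
        exact h2
      rw [tsum_congr hterm]
      rw [ENNReal.tsum_eq_iSup_sum]
      apply iSup_le
      intro s
      obtain ⟨N, hN⟩ : ∃ N, s ⊆ Finset.range N :=
        ⟨s.sup id + 1, fun i hi => Finset.mem_range.mpr (Nat.lt_succ_of_le (Finset.le_sup (f := id) hi))⟩
      have hdisj : Set.PairwiseDisjoint ↑(Finset.range N)
          (fun n : ℕ => Set.Ico ((k:ℝ) - n) ((k:ℝ)+1 - n)) := by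
        intro m _ n _ hmn
        apply Set.disjoint_left.mpr
        intro t htm htn
        simp only [Set.mem_Ico] at htm htn
        rcases lt_or_gt_of_ne hmn with h | h
        · have hmn' : (m:ℝ) + 1 ≤ n := by exact_mod_cast h
          linarith [htm.1, htn.2]
        · have hmn' : (n:ℝ) + 1 ≤ m := by exact_mod_cast h
          linarith [htm.2, htn.1]
      calc ∑ n ∈ s, ∫⁻ t in Set.Ico ((k:ℝ) - n) ((k:ℝ)+1 - n), ENNReal.ofReal ((φ t)^2)
          ≤ ∑ n ∈ Finset.range N, ∫⁻ t in Set.Ico ((k:ℝ) - n) ((k:ℝ)+1 - n),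
              ENNReal.ofReal ((φ t)^2) := Finset.sum_le_sum_of_subset hN
        _ = ∫⁻ t in ⋃ n ∈ Finset.range N, Set.Ico ((k:ℝ) - n) ((k:ℝ)+1 - n),
              ENNReal.ofReal ((φ t)^2) :=
            (lintegral_biUnion_finset hdisj (fun n _ => measurableSet_Ico) _).symm
        _ ≤ ∫⁻ t in Set.Ici (-(N:ℝ)), ENNReal.ofReal ((φ t)^2) := by
            apply lintegral_mono_set
            intro t ht
            simp only [Set.mem_iUnion, Set.mem_Ico, Finset.mem_range] at ht
            obtain ⟨n, hn, h1, _⟩ := ht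
            have hn' : (n:ℝ) ≤ N := by exact_mod_cast le_of_lt hn
            have hk0 : (0:ℝ) ≤ k := Nat.cast_nonneg k
            exact le_trans (by linarith) h1
        _ ≤ ENNReal.ofReal (b^2) := hlb N
    have hfin := ae_lt_top' (AEMeasurable.ennreal_tsum hmeas)
      (lt_of_le_of_lt hbound ENNReal.ofReal_lt_top).ne
    filter_upwards [hfin] with t ht
    have hns : Summable (fun n : ℕ => Real.toNNReal ((φ (t - (n:ℝ)))^2)) := by
      apply ENNReal.tsum_coe_ne_top_iff_summable.mp
      exact ht.ne
    exact (NNReal.summable_coe.mpr hns).congr fun n => Real.coe_toNNReal _ (sq_nonneg _)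
  have hcover : Set.Ici (0:ℝ) ⊆ ⋃ k : ℕ, Set.Ico ((k:ℝ)) ((k:ℝ)+1) := by
    intro t ht
    exact Set.mem_iUnion.mpr ⟨⌊t⌋₊, Nat.floor_le ht, Nat.lt_floor_add_one t⟩
  have hU := (ae_restrict_iUnion_iff (fun k : ℕ => Set.Ico ((k:ℝ)) ((k:ℝ)+1)) _).mpr main
  exact (ae_mono (Measure.restrict_mono hcover le_rfl)) hU

end MeasurePart
section Main
open MeasureTheory

lemma tsum_delta (d : ℕ) (v : ℕ → ℝ) : ∑' k : ℕ, delaySeq d k * v k = v d := by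
  have h : (fun k : ℕ => delaySeq d k * v k) = fun k => if k = d then v d else 0 := by
    funext k
    unfold delaySeq
    by_cases h : k = d
    · subst h; simp
    · simp [h]
  rw [h, tsum_ite_eq]

lemma delay_sq_summable (d : ℕ) : Summable (fun k : ℕ => (delaySeq d k)^2) := by
  have h : (fun k : ℕ => (delaySeq d k)^2) = fun k => if k = d then (1:ℝ) else 0 := by
    funext k; unfold delaySeq; split <;> norm_num
  rw [h]
  exact (hasSum_ite_eq d (1:ℝ)).summable

lemma delay_abs_summable (d : ℕ) : Summable (fun k : ℕ => |delaySeq d k|) := by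
  have h : (fun k : ℕ => |delaySeq d k|) = fun k => if k = d then (1:ℝ) else 0 := by
    funext k; unfold delaySeq; split <;> norm_num
  rw [h]
  exact (hasSum_ite_eq d (1:ℝ)).summable

lemma l2norm_delay (d : ℕ) : l2norm (delaySeq d) = 1 := by
  unfold l2norm
  have h : (fun k : ℕ => (delaySeq d k)^2) = fun k => if k = d then (1:ℝ) else 0 := by
    funext k; unfold delaySeq; split <;> norm_num
  rw [h, tsum_ite_eq]
  exact Real.sqrt_one

/-- Proposition 3 of the paper: if `φ` generates a Riesz basis with constants
`0 < a ≤ b`, and `y` is the causal spline reconstruction of `x = ∑ c(n) φ(·-n)` using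
a causal filter `ψ` with delay `d`, then the L² reconstruction error is bounded by
`(b/a)` times the H^∞ norm of the discrete error system `z^{-d} - ψ(z)φ_s(z)`. -/
theorem stmt13 (φ : ℝ → ℝ) (a b : ℝ) (ha : 0 < a) (hab : a ≤ b)
    (hRiesz : ∀ c : ℕ → ℝ, Summable (fun n => (c n) ^ 2) →
      a * l2norm c ≤ L2norm (fun t => ∑' n : ℕ, c n * φ (t - n)) ∧
      L2norm (fun t => ∑' n : ℕ, c n * φ (t - n)) ≤ b * l2norm c)
    (ψ φs : ℕ → ℝ) (hψ : Summable fun n => |ψ n|) (hφs : Summable fun n => |φs n|)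
    (hs : ∀ n : ℕ, φs n = φ n)
    (d : ℕ) (c : ℕ → ℝ) (hc : Summable fun n => (c n) ^ 2)
    (x : ℝ → ℝ) (hx : ∀ t : ℝ, x t = ∑' n : ℕ, c n * φ (t - n))
    (hsamp : ∀ m : ℕ, x m = cconv φs c m)
    (y : ℝ → ℝ) (hy : ∀ t : ℝ, y t = ∑' n : ℕ, cconv ψ (fun k : ℕ => x k) n * φ (t - n)) :
    L2norm (fun t => x (t - d) - y t) ≤
      (b / a) * HinfNorm (fun n => delaySeq d n - cconv ψ φs n) * L2norm x := by
  classical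
  set E : ℕ → ℝ := fun n => delaySeq d n - cconv ψ φs n with hEdef
  -- Step A: Riesz bounds applied to delta sequences
  have hRd : ∀ n : ℕ, a ≤ L2norm (fun t => φ (t - (n:ℝ)))
      ∧ L2norm (fun t => φ (t - (n:ℝ))) ≤ b := by
    intro n
    obtain ⟨h1, h2⟩ := hRiesz (delaySeq n) (delay_sq_summable n)
    have hfun : (fun t : ℝ => ∑' k : ℕ, delaySeq n k * φ (t - (k:ℝ)))
        = fun t => φ (t - (n:ℝ)) := by
      funext t
      exact tsum_delta n (fun k => φ (t - (k:ℝ)))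
    rw [hfun, l2norm_delay, mul_one] at h1 h2
    exact ⟨h1, h2⟩
  have hInt : ∀ n : ℕ, IntegrableOn (fun t => (φ (t - (n:ℝ)))^2) (Set.Ici (0:ℝ)) := by
    intro n
    by_contra hni
    have h0 : ∫ t in Set.Ici (0:ℝ), (φ (t - (n:ℝ)))^2 = 0 := integral_undef hni
    have h1 := (hRd n).1
    rw [L2norm, h0, Real.sqrt_zero] at h1
    linarith
  have hBnd : ∀ n : ℕ, ∫ t in Set.Ici (0:ℝ), (φ (t - (n:ℝ)))^2 ≤ b^2 := by
    intro n
    have h2 := (hRd n).2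
    rw [L2norm] at h2
    have h0 : 0 ≤ ∫ t in Set.Ici (0:ℝ), (φ (t - (n:ℝ)))^2 :=
      integral_nonneg fun t => sq_nonneg _
    calc ∫ t in Set.Ici (0:ℝ), (φ (t - (n:ℝ)))^2
        = (Real.sqrt (∫ t in Set.Ici (0:ℝ), (φ (t - (n:ℝ)))^2))^2 := (Real.sq_sqrt h0).symm
      _ ≤ b^2 := pow_le_pow_left₀ (Real.sqrt_nonneg _) h2 2
  have hae := phi_sq_summable_ae φ b hInt hBnd
  -- summability facts
  have he1 : Summable fun n => |cconv ψ φs n| := cconv_l1 hψ hφs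
  have heE : Summable fun n => |E n| := by
    apply Summable.of_nonneg_of_le (fun n => abs_nonneg _) (fun n => ?_)
      ((delay_abs_summable d).add he1)
    exact abs_sub _ _
  set v : ℕ → ℝ := cconv E c with hvdef
  obtain ⟨hv2, hvbound⟩ := stepD E c heE hc
  set cd : ℕ → ℝ := cconv (delaySeq d) c with hcddef
  set q : ℕ → ℝ := cconv (cconv ψ φs) c with hqdef
  have hq2 : Summable fun n => (q n)^2 := (stepD (cconv ψ φs) c he1 hc).1
  have hcd2 : Summable fun n => (cd n)^2 := by
    apply (summable_nat_add_iff d).mp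
    have h : (fun n : ℕ => (cd (n + d))^2) = fun n => (c n)^2 := by
      funext n
      rw [hcddef, cconv_delay, if_pos (Nat.le_add_left d n)]
      congr 2
      omega
    rw [h]
    exact hc
  have hveq : ∀ n, v n = cd n - q n := by
    intro n
    rw [hvdef, hcddef, hqdef]
    exact cconv_sub _ _ _ n
  -- pointwise identity a.e. on Ici 0
  have hgood : ∀ᵐ t ∂(volume.restrict (Set.Ici (0:ℝ))),
      x (t - (d:ℝ)) - y t = ∑' n : ℕ, v n * φ (t - (n:ℝ)) := by
    filter_upwards [hae] with t hsum2
    have hmul : ∀ (u : ℕ → ℝ), Summable (fun n => (u n)^2) →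
        Summable (fun n : ℕ => u n * φ (t - (n:ℝ))) := by
      intro u hu
      apply Summable.of_abs
      apply Summable.of_nonneg_of_le (fun n => abs_nonneg _) (fun n => ?_)
        ((hu.add hsum2).div_const 2)
      rw [abs_mul]
      nlinarith [sq_nonneg (|u n| - |φ (t - (n:ℝ))|), sq_abs (u n),
        sq_abs (φ (t - (n:ℝ))), abs_nonneg (u n), abs_nonneg (φ (t - (n:ℝ)))]
    have hclaim1 : x (t - (d:ℝ)) = ∑' n : ℕ, cd n * φ (t - (n:ℝ)) := by
      rw [hx (t - (d:ℝ))]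
      symm
      have hinj : Function.Injective (fun n : ℕ => n + d) := add_left_injective d
      have hsupp : Function.support (fun m : ℕ => cd m * φ (t - (m:ℝ)))
          ⊆ Set.range (fun n : ℕ => n + d) := by
        intro m hm
        by_contra hr
        apply hm
        have hmd : m < d := by
          by_contra hge
          refine hr ⟨m - d, ?_⟩
          show m - d + d = m
          omega
        show cconv (delaySeq d) c m * φ (t - (m:ℝ)) = 0
        rw [cconv_delay, if_neg (by omega), zero_mul]
      have hre := Function.Injective.tsum_eq hinj hsupp
      rw [← hre]
      apply tsum_congr
      intro n
      rw [hcddef, cconv_delay, if_pos (Nat.le_add_left d n)]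
      have h1 : n + d - d = n := by omega
      rw [h1]
      congr 1
      push_cast
      ring
    have hclaim2 : y t = ∑' n : ℕ, q n * φ (t - (n:ℝ)) := by
      rw [hy t]
      apply tsum_congr
      intro n
      congr 1
      have hxc : cconv ψ (fun k : ℕ => x (k:ℝ)) n = cconv ψ (cconv φs c) n :=
        Finset.sum_congr rfl fun k _ => by simp only [hsamp]
      rw [hxc, cconv_assoc]
    rw [hclaim1, hclaim2, ← Summable.tsum_sub (hmul cd hcd2) (hmul q hq2)]
    apply tsum_congr
    intro n
    rw [hveq n]
    ring
  -- L² conclusion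
  have hberr : L2norm (fun t => x (t - (d:ℝ)) - y t)
      = L2norm (fun t => ∑' n : ℕ, v n * φ (t - (n:ℝ))) := by
    unfold L2norm
    congr 1
    apply integral_congr_ae
    filter_upwards [hgood] with t ht
    rw [ht]
  obtain ⟨_, hup⟩ := hRiesz v hv2
  obtain ⟨hlowc, _⟩ := hRiesz c hc
  have hxL2 : L2norm x = L2norm (fun t => ∑' n : ℕ, c n * φ (t - (n:ℝ))) := by
    congr 1
    funext t
    exact hx t
  have hH0 : 0 ≤ HinfNorm E := hinf_nonneg E
  have hb0 : 0 ≤ b := le_trans ha.le hab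
  have hlv : l2norm v ≤ HinfNorm E * l2norm c := by
    unfold l2norm
    calc Real.sqrt (∑' n, (v n)^2)
        ≤ Real.sqrt ((HinfNorm E)^2 * ∑' n, (c n)^2) := Real.sqrt_le_sqrt hvbound
      _ = HinfNorm E * Real.sqrt (∑' n, (c n)^2) := by
          rw [Real.sqrt_mul (sq_nonneg _), Real.sqrt_sq hH0]
  have hlc : l2norm c ≤ L2norm x / a := by
    rw [le_div_iff₀ ha, hxL2]
    linarith [hlowc]
  calc L2norm (fun t => x (t - (d:ℝ)) - y t)
      = L2norm (fun t => ∑' n : ℕ, v n * φ (t - (n:ℝ))) := hberr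
    _ ≤ b * l2norm v := hup
    _ ≤ b * (HinfNorm E * (L2norm x / a)) := by
        apply mul_le_mul_of_nonneg_left _ hb0
        calc l2norm v ≤ HinfNorm E * l2norm c := hlv
          _ ≤ HinfNorm E * (L2norm x / a) := mul_le_mul_of_nonneg_left hlc hH0
    _ = (b / a) * HinfNorm E * L2norm x := by
        field_simp

end Main
end

section
/- Let α₁ = -2-√3 and d → ∞. Then the optimal H^∞ approximation error J_opt(d) = inf over stable causal ψ of ‖z^{-d} - ψ(z)φ(z)‖_{H^∞}, where φ(z) = (1/6)+(2/3)z⁻¹+(1/6)z⁻², equals |α₁|^{-d} and tends to 0 as d → ∞. -/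
open MeasureTheory

/-- The sampled cubic B-spline sequence: `φ_s = (1/6, 2/3, 1/6, 0, 0, …)`, whose
Z-transform is `φ(z) = 1/6 + (2/3)z⁻¹ + (1/6)z⁻²`. -/
noncomputable def cubicPhis : ℕ → ℝ := fun n =>
  if n = 0 then 1/6 else if n = 1 then 2/3 else if n = 2 then 1/6 else 0

/-- The optimal H^∞ approximation error with delay `d`: infimum over stable causal
filters `ψ` of `‖z^{-d} - ψ(z)φ(z)‖_∞`. -/
noncomputable def Jopt (d : ℕ) : ℝ :=
  ⨅ ψ : {ψ : ℕ → ℝ // Summable fun n => |ψ n|},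
    HinfNorm (fun n => delaySeq d n - cconv ψ.1 cubicPhis n)

namespace NP15

noncomputable def w0 : ℝ := Real.sqrt 3 - 2

lemma sqrt3_lt : Real.sqrt 3 < 2 := by
  nlinarith [Real.sq_sqrt (by norm_num : (0:ℝ) ≤ 3), Real.sqrt_nonneg 3]

lemma sqrt3_gt : (1:ℝ) < Real.sqrt 3 := by
  nlinarith [Real.sq_sqrt (by norm_num : (0:ℝ) ≤ 3), Real.sqrt_nonneg 3]

lemma w0_neg : w0 < 0 := by simp only [w0]; linarith [sqrt3_lt]
lemma w0_ne : w0 ≠ 0 := ne_of_lt w0_neg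
lemma abs_w0 : |w0| = 2 - Real.sqrt 3 := by
  rw [abs_of_neg w0_neg]; simp [w0]
lemma abs_w0_pos : 0 < |w0| := abs_pos.mpr w0_ne
lemma abs_w0_lt_one : |w0| < 1 := by rw [abs_w0]; linarith [sqrt3_gt]
lemma quad : w0 ^ 2 + 4 * w0 + 1 = 0 := by
  have := Real.sq_sqrt (by norm_num : (0:ℝ) ≤ 3)
  simp only [w0]; nlinarith

lemma hkey (m : ℤ) : w0 ^ (m + 2) + 4 * w0 ^ (m + 1) + w0 ^ m = 0 := by
  have h1 : w0 ^ (m + 2) = w0 ^ m * (w0 * w0) := by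
    rw [zpow_add₀ w0_ne, zpow_two]
  have h2 : w0 ^ (m + 1) = w0 ^ m * w0 := by
    rw [zpow_add₀ w0_ne, zpow_one]
  rw [h1, h2]
  linear_combination (w0 ^ m) * quad

lemma cconv_phis (ψ : ℕ → ℝ) (n : ℕ) :
    cconv ψ cubicPhis n = (1/6) * ψ n + (2/3) * (if n = 0 then 0 else ψ (n-1))
      + (1/6) * (if n ≤ 1 then 0 else ψ (n-2)) := by
  match n with
  | 0 => simp [cconv, cubicPhis]; ring
  | 1 => simp [cconv, cubicPhis, Finset.sum_range_succ]; ring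
  | (n+2) =>
    have hsub : Finset.range 3 ⊆ Finset.range (n + 3) := by
      apply Finset.range_subset_range.mpr; omega
    have : cconv ψ cubicPhis (n+2) = ∑ k ∈ Finset.range 3, ψ (n + 2 - k) * cubicPhis k := by
      rw [cconv, ← Finset.sum_subset hsub]
      intro x _ hx
      simp only [Finset.mem_range] at hx
      have hx0 : x ≠ 0 := by omega
      have hx1 : x ≠ 1 := by omega
      have hx2 : x ≠ 2 := by omega
      simp [cubicPhis, hx0, hx1, hx2]
    rw [this]
    simp [Finset.sum_range_succ, cubicPhis]
    ring





lemma sq_lt_one : w0 ^ 2 < 1 := by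
  have := abs_w0_lt_one
  nlinarith [abs_nonneg w0, sq_abs w0]

lemma one_sub_sq_ne : (1:ℝ) - w0 ^ 2 ≠ 0 := by
  have := sq_lt_one; intro h; linarith

noncomputable def B : ℝ := 6 / (1 - w0 ^ 2)

noncomputable def psiStar (d : ℕ) (n : ℕ) : ℝ :=
  B * (w0 ^ (d + n + 2) - w0 ^ (d + n + 2 - 2 * min (n+1) d))

/-- target: `δ_d - w0^d δ_0` -/
noncomputable def tgt (d : ℕ) (n : ℕ) : ℝ :=
  (if n = d then 1 else 0) - w0 ^ d * (if n = 0 then 1 else 0)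

lemma psiStar_eq (d n a b : ℕ) (h1 : d + n + 2 = a) (h2 : d + n + 2 - 2 * min (n+1) d = b) :
    psiStar d n = B * (w0 ^ a - w0 ^ b) := by rw [psiStar, h2, h1]

lemma psiStar_conv (d n : ℕ) : cconv (psiStar d) cubicPhis n = tgt d n := by
  have hq := quad
  have hne := one_sub_sq_ne
  rw [cconv_phis]
  match n with
  | 0 =>
    rw [if_pos rfl, tgt, if_pos rfl]
    rcases Nat.eq_zero_or_pos d with hd | hd
    · subst hd
      rw [psiStar_eq 0 0 2 2 (by omega) (by omega)]
      norm_num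
    · rw [if_pos (show (0:ℕ) ≤ 1 by norm_num), psiStar_eq d 0 (d+2) d (by omega) (by omega),
        if_neg (by omega : ¬ (0:ℕ) = d), B]
      field_simp
      ring
  | 1 =>
    rw [if_neg (by omega : ¬ (1:ℕ) = 0), tgt,
      if_neg (by omega : ¬ (1:ℕ) = 0), if_pos (show (1:ℕ) ≤ 1 by norm_num)]
    match d with
    | 0 =>
      rw [psiStar_eq 0 1 3 3 (by omega) (by omega),
        psiStar_eq 0 0 2 2 (by omega) (by omega)]
      norm_num
    | 1 =>
      rw [psiStar_eq 1 1 4 2 (by omega) (by omega),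
        psiStar_eq 1 0 3 1 (by omega) (by omega),
        if_pos rfl, B]
      field_simp
      linear_combination (-3*w0^4 + 6*w0^2 - 3 + (3*w0^4 + 12*w0^2 - 15)) * hq
    | (t+2) =>
      rw [psiStar_eq (t+2) 1 (t+5) (t+1) (by omega) (by omega),
        psiStar_eq (t+2) 0 (t+4) (t+2) (by omega) (by omega),
        if_neg (by omega : ¬ (1:ℕ) = t+2), B]
      field_simp
      linear_combination (w0^(t+1) * (-3*w0^4 + 5*w0^2 - 2) + w0^t*(w0^3 - w0) + w0*w0^t*(3*w0^4 + 12*w0^2 - 15)) * hq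
  | (k+2) =>
    rw [if_neg (by omega : ¬ (k+2 = 0)), if_neg (by omega : ¬ (k+2 ≤ 1)), tgt,
      if_neg (by omega : ¬ (k+2 = 0))]
    rcases lt_trichotomy (k+2) d with hlt | heq | hgt
    · -- k+2 < d : write d = k+3+t
      obtain ⟨t, rfl⟩ : ∃ t, d = k+3+t := ⟨d - (k+3), by omega⟩
      rw [psiStar_eq (k+3+t) (k+2) (2*k+7+t) (t+1) (by omega) (by omega),
        psiStar_eq (k+3+t) (k+2-1) (2*k+6+t) (t+2) (by omega) (by omega),
        psiStar_eq (k+3+t) (k+2-2) (2*k+5+t) (t+3) (by omega) (by omega),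
        if_neg (by omega : ¬ (k+2 = k+3+t)), B]
      field_simp
      linear_combination (w0^(t+1) * (1 - w0^(2*k+4)) + w0^(2*k)*w0^t*(3*w0^9 - 6*w0^7 + 4*w0^5) + w0^t*(-3*w0^5 + 6*w0^3 - 4*w0) + (2-w0^2)*(3*w0^7*w0^(2*k)*w0^t - 3*w0^3*w0^t)) * hq
    · -- k+2 = d
      subst heq
      rw [psiStar_eq (k+2) (k+2) (2*k+6) 2 (by omega) (by omega),
        psiStar_eq (k+2) (k+2-1) (2*k+5) 1 (by omega) (by omega),
        psiStar_eq (k+2) (k+2-2) (2*k+4) 2 (by omega) (by omega),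
        if_pos rfl, B]
      field_simp
      linear_combination (1 - w0^(2*k+4) + w0^(2*k)*(3*w0^8 - 6*w0^6 + 4*w0^4) + (-3*w0^4 + 6*w0^2 - 4) + (2-w0^2)*(3*w0^6*w0^(2*k) - 3*w0^2)) * hq
    · -- d < k+2 : write k+1 = d+s
      obtain ⟨s, hs⟩ : ∃ s, k+1 = d+s := ⟨k+1 - d, by omega⟩
      rw [psiStar_eq d (k+2) (d+k+4) (s+3) (by omega) (by omega),
        psiStar_eq d (k+2-1) (d+k+3) (s+2) (by omega) (by omega),
        psiStar_eq d (k+2-2) (d+k+2) (s+1) (by omega) (by omega),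
        if_neg (by omega : ¬ (k+2 = d)), B]
      field_simp
      linear_combination (w0^(s+1) * (1 - w0^(d+k+2)) + w0^d*w0^k*(3*w0^6 - 6*w0^4 + 3*w0^2) + w0^d*w0^k*w0^s*w0^3 + w0^s*(-3*w0^5 + 6*w0^3 - 4*w0) + (2-w0^2)*(3*w0^4*w0^d*w0^k - 3*w0^3*w0^s)) * hq

section LowerBound

variable {ψ : ℕ → ℝ} (d : ℕ)

lemma summable_cconv (hψ : Summable fun n => |ψ n|) :
    Summable fun n => cconv ψ cubicPhis n := by
  have h0 : Summable ψ := hψ.of_abs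
  have h1 : Summable (fun n => if n = 0 then (0:ℝ) else ψ (n-1)) := by
    rw [← summable_nat_add_iff 1]
    simpa using h0
  have h2 : Summable (fun n => if n ≤ 1 then (0:ℝ) else ψ (n-2)) := by
    rw [← summable_nat_add_iff 2]
    simpa using h0
  have := ((h0.mul_left (1/6)).add (h1.mul_left (2/3))).add (h2.mul_left (1/6))
  exact this.congr fun n => (cconv_phis ψ n).symm

lemma summable_err (hψ : Summable fun n => |ψ n|) :
    Summable fun n => delaySeq d n - cconv ψ cubicPhis n := by
  have h3 : Summable (delaySeq d) :=
    summable_of_ne_finset_zero (s := {d}) (by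
      intro n hn; simp only [Finset.mem_singleton] at hn; simp [delaySeq, hn])
  exact h3.sub (summable_cconv hψ)

lemma summable_err_mul (hψ : Summable fun n => |ψ n|) {z : ℂ} (hz : ‖z‖ ≤ 1) :
    Summable fun n => ‖((delaySeq d n - cconv ψ cubicPhis n : ℝ) : ℂ) * z ^ n‖ := by
  apply Summable.of_nonneg_of_le (fun n => norm_nonneg _)
    (fun n => ?_) ((summable_err d hψ).abs)
  rw [norm_mul, norm_pow]
  calc ‖((delaySeq d n - cconv ψ cubicPhis n : ℝ) : ℂ)‖ * ‖z‖ ^ n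
      ≤ ‖((delaySeq d n - cconv ψ cubicPhis n : ℝ) : ℂ)‖ * 1 := by
        apply mul_le_mul_of_nonneg_left _ (norm_nonneg _)
        exact pow_le_one₀ (norm_nonneg z) hz
    _ = |delaySeq d n - cconv ψ cubicPhis n| := by
        rw [mul_one, Complex.norm_real, Real.norm_eq_abs]

/-- the analytic extension of the error transfer function to the disk (in `w = z⁻¹`). -/
noncomputable def errF (ψ : ℕ → ℝ) (d : ℕ) (z : ℂ) : ℂ :=
  ∑' n : ℕ, ((delaySeq d n - cconv ψ cubicPhis n : ℝ) : ℂ) * z ^ n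

lemma errF_circle (hψ : Summable fun n => |ψ n|) (θ : ℝ) :
    errF ψ d (Complex.exp (-θ * Complex.I)) =
      Ztrans (fun n => delaySeq d n - cconv ψ cubicPhis n) (Complex.exp (θ * Complex.I)) := by
  rw [errF, Ztrans]
  congr 1
  ext n
  congr 2
  rw [← Complex.exp_neg]
  ring_nf

lemma bddAbove_range (hψ : Summable fun n => |ψ n|) :
    BddAbove (Set.range fun θ : ℝ => ‖
      (Ztrans (fun n => delaySeq d n - cconv ψ cubicPhis n) (Complex.exp (θ * Complex.I)))‖) := by
  refine ⟨∑' n, |delaySeq d n - cconv ψ cubicPhis n|, ?_⟩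
  rintro x ⟨θ, rfl⟩
  simp only
  rw [Ztrans]
  refine (norm_tsum_le_tsum_norm ?_).trans ?_
  · have : ‖(Complex.exp (θ * Complex.I))⁻¹‖ ≤ 1 := by
      rw [norm_inv, Complex.norm_exp_ofReal_mul_I]; norm_num
    exact summable_err_mul d hψ this
  · apply Summable.tsum_le_tsum _ _ ((summable_err d hψ).abs)
    · intro n
      have hnrm : ‖(Complex.exp ((θ:ℂ) * Complex.I))⁻¹‖ = 1 := by
        rw [norm_inv, Complex.norm_exp_ofReal_mul_I]; norm_num
      rw [norm_mul, norm_pow, hnrm, one_pow, mul_one, Complex.norm_real, Real.norm_eq_abs]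
    · have : ‖(Complex.exp (θ * Complex.I))⁻¹‖ ≤ 1 := by
        rw [norm_inv, Complex.norm_exp_ofReal_mul_I]; norm_num
      exact summable_err_mul d hψ this

lemma errF_sphere_le (hψ : Summable fun n => |ψ n|) {z : ℂ} (hz : z ∈ Metric.sphere (0:ℂ) 1) :
    ‖errF ψ d z‖ ≤ HinfNorm (fun n => delaySeq d n - cconv ψ cubicPhis n) := by
  rw [Metric.mem_sphere, Complex.dist_eq, sub_zero] at hz
  obtain ⟨θ, hθ⟩ := (Complex.norm_eq_one_iff z).mp hz
  have h1 : errF ψ d z = Ztrans (fun n => delaySeq d n - cconv ψ cubicPhis n)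
      (Complex.exp ((-θ : ℝ) * Complex.I)) := by
    rw [← errF_circle d hψ (-θ)]
    congr 1
    push_cast
    rw [neg_neg, hθ]
  rw [h1, HinfNorm]
  exact le_ciSup (bddAbove_range d hψ) (-θ)

lemma summable_mul_pow (f : ℕ → ℝ) (hf : Summable fun n => |f n|) {z : ℂ}
    (hz : ‖z‖ ≤ 1) : Summable fun n => ((f n : ℝ):ℂ) * z ^ n := by
  apply Summable.of_norm
  apply Summable.of_nonneg_of_le (fun n => norm_nonneg _) (fun n => ?_) hf
  rw [norm_mul, norm_pow, Complex.norm_real, Real.norm_eq_abs]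
  calc _ ≤ |f n| * 1 := by
        apply mul_le_mul_of_nonneg_left _ (abs_nonneg _)
        exact pow_le_one₀ (norm_nonneg z) hz
    _ = _ := mul_one _

lemma summable_abs_delay (d : ℕ) : Summable fun n => |delaySeq d n| :=
  summable_of_ne_finset_zero (s := {d}) (by
    intro n hn; simp only [Finset.mem_singleton] at hn; simp [delaySeq, hn])

lemma errF_diffContOnCl (hψ : Summable fun n => |ψ n|) :
    DiffContOnCl ℂ (errF ψ d) (Metric.ball (0:ℂ) 1) := by
  constructor
  · apply Complex.differentiableOn_tsum_of_summable_norm ((summable_err d hψ).abs)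
      (fun n => (Differentiable.differentiableOn (by fun_prop))) Metric.isOpen_ball
    intro n w hw
    rw [Metric.mem_ball, Complex.dist_eq, sub_zero] at hw
    rw [norm_mul, norm_pow, Complex.norm_real, Real.norm_eq_abs]
    calc _ ≤ |delaySeq d n - cconv ψ cubicPhis n| * 1 := by
          apply mul_le_mul_of_nonneg_left _ (abs_nonneg _)
          exact pow_le_one₀ (norm_nonneg w) (le_of_lt hw)
      _ = _ := mul_one _
  · rw [closure_ball (0:ℂ) one_ne_zero]
    apply continuousOn_tsum (fun n => (Continuous.continuousOn (by fun_prop)))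
      ((summable_err d hψ).abs)
    intro n w hw
    rw [Metric.mem_closedBall, Complex.dist_eq, sub_zero] at hw
    rw [norm_mul, norm_pow, Complex.norm_real, Real.norm_eq_abs]
    calc _ ≤ |delaySeq d n - cconv ψ cubicPhis n| * 1 := by
          apply mul_le_mul_of_nonneg_left _ (abs_nonneg _)
          exact pow_le_one₀ (norm_nonneg w) hw
      _ = _ := mul_one _

lemma errF_at_w0 (hψ : Summable fun n => |ψ n|) :
    errF ψ d ((w0 : ℝ) : ℂ) = ((w0 ^ d : ℝ) : ℂ) := by
  have habs : ‖((w0:ℝ):ℂ)‖ ≤ 1 := by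
    rw [Complex.norm_real, Real.norm_eq_abs]; exact le_of_lt abs_w0_lt_one
  set z : ℂ := ((w0:ℝ):ℂ) with hzdef
  have hφ : Summable fun k => ‖((cubicPhis k : ℝ) : ℂ) * z ^ k‖ :=
    summable_of_ne_finset_zero (s := Finset.range 3) (by
      intro k hk
      simp only [Finset.mem_range, not_lt] at hk
      have h0 : k ≠ 0 := by omega
      have h1 : k ≠ 1 := by omega
      have h2 : k ≠ 2 := by omega
      simp [cubicPhis, h0, h1, h2])
  have hg : Summable fun k => ‖((ψ k : ℝ) : ℂ) * z ^ k‖ := by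
    apply Summable.of_nonneg_of_le (fun n => norm_nonneg _) (fun n => ?_) hψ
    rw [norm_mul, norm_pow, Complex.norm_real, Real.norm_eq_abs]
    calc _ ≤ |ψ n| * 1 := by
          apply mul_le_mul_of_nonneg_left _ (abs_nonneg _)
          exact pow_le_one₀ (norm_nonneg z) habs
      _ = _ := mul_one _
  -- Cauchy product
  have hcp := tsum_mul_tsum_eq_tsum_sum_range_of_summable_norm hφ hg
  have hinner : ∀ n : ℕ, (∑ k ∈ Finset.range (n+1),
      (((cubicPhis k : ℝ):ℂ) * z ^ k) * (((ψ (n-k) : ℝ):ℂ) * z ^ (n-k)))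
        = ((cconv ψ cubicPhis n : ℝ) : ℂ) * z ^ n := by
    intro n
    rw [cconv]
    push_cast
    rw [Finset.sum_mul]
    apply Finset.sum_congr rfl
    intro k hk
    rw [Finset.mem_range] at hk
    have : z ^ k * z ^ (n - k) = z ^ n := by
      rw [← pow_add]; congr 1; omega
    calc (((cubicPhis k : ℝ):ℂ) * z ^ k) * (((ψ (n-k) : ℝ):ℂ) * z ^ (n-k))
        = ((ψ (n-k) : ℝ):ℂ) * ((cubicPhis k : ℝ):ℂ) * (z ^ k * z ^ (n - k)) := by ring
      _ = _ := by rw [this]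
  have hφ0 : (∑' k, ((cubicPhis k : ℝ):ℂ) * z ^ k) = 0 := by
    rw [tsum_eq_sum (s := Finset.range 3) (by
      intro k hk
      simp only [Finset.mem_range, not_lt] at hk
      have h0 : k ≠ 0 := by omega
      have h1 : k ≠ 1 := by omega
      have h2 : k ≠ 2 := by omega
      simp [cubicPhis, h0, h1, h2])]
    have hq := quad
    simp only [Finset.sum_range_succ, Finset.sum_range_zero, cubicPhis]
    norm_num
    rw [hzdef]
    push_cast
    have : ((w0:ℂ))^2 + 4*(w0:ℂ) + 1 = 0 := by
      have : (((w0^2 + 4*w0 + 1 : ℝ)) : ℂ) = 0 := by rw [hq]; norm_num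
      push_cast at this
      linear_combination this
    linear_combination (1/6 : ℂ) * this
  have hconv : (∑' n, ((cconv ψ cubicPhis n : ℝ) : ℂ) * z ^ n) = 0 := by
    rw [← tsum_congr hinner, ← hcp, hφ0, zero_mul]
  have hdelay : (∑' n, ((delaySeq d n : ℝ) : ℂ) * z ^ n) = ((w0 ^ d : ℝ) : ℂ) := by
    rw [tsum_eq_single d (by
      intro n hn
      simp [delaySeq, hn])]
    simp [delaySeq, hzdef]
  have hsub : errF ψ d z = (∑' n, ((delaySeq d n : ℝ) : ℂ) * z ^ n)
      - (∑' n, ((cconv ψ cubicPhis n : ℝ) : ℂ) * z ^ n) := by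
    rw [errF, ← Summable.tsum_sub (summable_mul_pow _ (summable_abs_delay d) habs)
      (summable_mul_pow _ (summable_cconv hψ).abs habs)]
    congr 1; ext n; push_cast; ring
  rw [hsub, hconv, hdelay, sub_zero]

lemma lower_bound (hψ : Summable fun n => |ψ n|) :
    |w0| ^ d ≤ HinfNorm (fun n => delaySeq d n - cconv ψ cubicPhis n) := by
  have hmm := Complex.norm_le_of_forall_mem_frontier_norm_le
    (Metric.isBounded_ball (x := (0:ℂ)) (r := 1))
    (errF_diffContOnCl d hψ)
    (C := HinfNorm (fun n => delaySeq d n - cconv ψ cubicPhis n))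
    (fun z hz => by
      rw [frontier_ball (0:ℂ) one_ne_zero] at hz
      exact errF_sphere_le d hψ hz)
    (z := ((w0:ℝ):ℂ))
    (by
      rw [closure_ball (0:ℂ) one_ne_zero, Metric.mem_closedBall, Complex.dist_eq, sub_zero,
        Complex.norm_real, Real.norm_eq_abs]
      exact le_of_lt abs_w0_lt_one)
  rw [errF_at_w0 d hψ] at hmm
  calc |w0| ^ d = ‖((w0^d : ℝ):ℂ)‖ := by
        rw [Complex.norm_real, Real.norm_eq_abs, abs_pow]
    _ ≤ _ := hmm

end LowerBound

lemma psiStar_summable (d : ℕ) : Summable fun n => |psiStar d n| := by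
  have habs := abs_w0_lt_one
  have h0 : (0:ℝ) ≤ |w0| := abs_nonneg w0
  have hgeo : Summable fun n : ℕ => |w0| ^ (n - d) := by
    rw [← summable_nat_add_iff d]
    simpa using summable_geometric_of_lt_one h0 habs
  apply Summable.of_nonneg_of_le (fun n => abs_nonneg _) (fun n => ?_)
    (hgeo.mul_left (2 * |B|))
  rw [psiStar, abs_mul]
  calc |B| * |w0 ^ (d + n + 2) - w0 ^ (d + n + 2 - 2 * min (n+1) d)|
      ≤ |B| * (|w0| ^ (d + n + 2) + |w0| ^ (d + n + 2 - 2 * min (n+1) d)) := by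
        apply mul_le_mul_of_nonneg_left _ (abs_nonneg B)
        refine (abs_sub _ _).trans ?_
        rw [abs_pow, abs_pow]
    _ ≤ |B| * (|w0| ^ (n - d) + |w0| ^ (n - d)) := by
        apply mul_le_mul_of_nonneg_left _ (abs_nonneg B)
        apply add_le_add
        · exact pow_le_pow_of_le_one h0 habs.le (by omega)
        · exact pow_le_pow_of_le_one h0 habs.le (by omega)
    _ = 2 * |B| * |w0| ^ (n - d) := by ring

lemma upper_bound (d : ℕ) :
    HinfNorm (fun n => delaySeq d n - cconv (psiStar d) cubicPhis n) = |w0| ^ d := by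
  have hfun : (fun n => delaySeq d n - cconv (psiStar d) cubicPhis n)
      = (fun n => w0 ^ d * (if n = 0 then 1 else 0)) := by
    funext n
    rw [psiStar_conv, tgt, delaySeq]
    ring
  rw [hfun, HinfNorm]
  have hz : ∀ w : ℂ, Ztrans (fun n => w0 ^ d * (if n = 0 then 1 else 0)) w
      = ((w0 ^ d : ℝ) : ℂ) := by
    intro w
    rw [Ztrans, tsum_eq_single 0 (by intro n hn; simp [hn])]
    simp
  simp only [hz]
  rw [ciSup_const, Complex.norm_real, Real.norm_eq_abs, abs_pow]

lemma Jopt_eq (d : ℕ) : Jopt d = |w0| ^ d := by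
  apply le_antisymm
  · have hbdd : BddBelow (Set.range fun ψ : {ψ : ℕ → ℝ // Summable fun n => |ψ n|} =>
        HinfNorm (fun n => delaySeq d n - cconv ψ.1 cubicPhis n)) := by
      refine ⟨0, ?_⟩
      rintro x ⟨ψ, rfl⟩
      exact Real.iSup_nonneg fun θ => norm_nonneg _
    have := ciInf_le hbdd (⟨psiStar d, psiStar_summable d⟩ :
      {ψ : ℕ → ℝ // Summable fun n => |ψ n|})
    rwa [upper_bound d] at this
  · haveI : Nonempty {ψ : ℕ → ℝ // Summable fun n => |ψ n|} :=
      ⟨⟨0, by simpa using summable_zero⟩⟩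
    exact le_ciInf fun ψ => lower_bound d ψ.2

end NP15

/-- The optimal error equals `|α₁|^{-d} = (2+√3)^{-d}` and tends to `0` as `d → ∞`. -/
theorem stmt15 :
    (∀ d : ℕ, Jopt d = (2 + Real.sqrt 3) ^ (-(d : ℤ))) ∧
    Filter.Tendsto Jopt Filter.atTop (nhds 0) := by
  have hinv : (2 + Real.sqrt 3)⁻¹ = |NP15.w0| := by
    rw [NP15.abs_w0]
    have h := Real.sq_sqrt (by norm_num : (0:ℝ) ≤ 3)
    have hmul : (2 - Real.sqrt 3) * (2 + Real.sqrt 3) = 1 := by nlinarith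
    exact (eq_inv_of_mul_eq_one_left hmul).symm
  have key : ∀ d : ℕ, Jopt d = (2 + Real.sqrt 3) ^ (-(d : ℤ)) := by
    intro d
    rw [NP15.Jopt_eq d, zpow_neg, zpow_natCast, ← inv_pow, hinv]
  refine ⟨key, ?_⟩
  have h2 : Filter.Tendsto (fun d : ℕ => |NP15.w0| ^ d) Filter.atTop (nhds 0) :=
    tendsto_pow_atTop_nhds_zero_of_lt_one (abs_nonneg _) NP15.abs_w0_lt_one
  exact h2.congr fun d => (NP15.Jopt_eq d).symm
end

section
/- Suppose matrices A ∈ ℝ^{n×n}, B ∈ ℝ^{n×1}, C ∈ ℝ^{1×n}, D ∈ ℝ, a scalar γ > 0, and a positive definite P ∈ ℝ^{n×n} satisfy the block matrix inequality [[AᵀPA - P, AᵀPB, Cᵀ], [BᵀPA, -γI + BᵀPB, Dᵀ], [C, D, -γI]] < 0 (negative definite). Then all eigenvalues of A lie in the open unit disc and the transfer function G(z) = C(zI - A)^{-1}B + D satisfies |G(e^{iθ})| < γ for all θ ∈ [0, 2π). -/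
open Matrix

/-- The bounded real lemma LMI block matrix
`[[AᵀPA - P, AᵀPB, Cᵀ], [BᵀPA, -γI + BᵀPB, Dᵀ], [C, D, -γI]]`. -/
noncomputable def brlLMI (n : ℕ) (A : Matrix (Fin n) (Fin n) ℝ)
    (B : Matrix (Fin n) (Fin 1) ℝ) (C : Matrix (Fin 1) (Fin n) ℝ) (D γ : ℝ)
    (P : Matrix (Fin n) (Fin n) ℝ) :
    Matrix ((Fin n ⊕ Fin 1) ⊕ Fin 1) ((Fin n ⊕ Fin 1) ⊕ Fin 1) ℝ :=
  Matrix.fromBlocks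
    (Matrix.fromBlocks (Aᵀ * P * A - P) (Aᵀ * P * B) (Bᵀ * P * A)
      ((-γ) • (1 : Matrix (Fin 1) (Fin 1) ℝ) + Bᵀ * P * B))
    (Matrix.of (Sum.elim (fun i : Fin n => Cᵀ i) (fun _ : Fin 1 => fun _ : Fin 1 => D)))
    (Matrix.of (Sum.elim (fun i : Fin n => Cᵀ i) (fun _ : Fin 1 => fun _ : Fin 1 => D)))ᵀ
    ((-γ) • (1 : Matrix (Fin 1) (Fin 1) ℝ))

lemma conjT_map {m k : Type*} (M : Matrix m k ℝ) :
    (M.map Complex.ofReal)ᴴ = Mᵀ.map Complex.ofReal := by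
  ext i j
  simp [conjTranspose_apply, Complex.conj_ofReal]

lemma map_ofReal_mul {m k l : Type*} [Fintype k] (M : Matrix m k ℝ) (N : Matrix k l ℝ) :
    (M * N).map Complex.ofReal = M.map Complex.ofReal * N.map Complex.ofReal :=
  Matrix.map_mul (f := Complex.ofRealHom)

lemma re_dot_map {m : Type*} [Fintype m] (M : Matrix m m ℝ) (v : m → ℂ) :
    (star v ⬝ᵥ (M.map Complex.ofReal) *ᵥ v).re =
      (fun i => (v i).re) ⬝ᵥ M *ᵥ (fun i => (v i).re) +
      (fun i => (v i).im) ⬝ᵥ M *ᵥ (fun i => (v i).im) := by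
  simp only [dotProduct, mulVec, Finset.mul_sum, map_apply, Pi.star_apply]
  rw [Complex.re_sum, ← Finset.sum_add_distrib]
  refine Finset.sum_congr rfl fun i _ => ?_
  rw [Complex.re_sum, ← Finset.sum_add_distrib]
  apply Finset.sum_congr rfl
  intro j _
  simp only [RCLike.star_def, Complex.mul_re, Complex.conj_re, Complex.conj_im,
    Complex.ofReal_re, Complex.ofReal_im, Complex.mul_im]
  ring

lemma posQuadRe {m : Type*} [Fintype m] {M : Matrix m m ℝ} (hM : M.PosDef)
    {v : m → ℂ} (hv : v ≠ 0) :
    0 < (star v ⬝ᵥ (M.map Complex.ofReal) *ᵥ v).re := by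
  rw [re_dot_map]
  have h1 : ∀ u : m → ℝ, 0 ≤ u ⬝ᵥ M *ᵥ u := fun u => by
    simpa using hM.posSemidef.dotProduct_mulVec_nonneg u
  have h2 : ∀ u : m → ℝ, u ≠ 0 → 0 < u ⬝ᵥ M *ᵥ u := fun u hu => by
    simpa using hM.dotProduct_mulVec_pos hu
  by_cases hx : (fun i => (v i).re) = (0 : m → ℝ)
  · have hy : (fun i => (v i).im) ≠ (0 : m → ℝ) := by
      intro hy
      apply hv
      funext i
      have h1 := congrFun hx i
      have h2 := congrFun hy i
      simp only [Pi.zero_apply] at h1 h2 ⊢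
      exact Complex.ext h1 h2
    have := h2 _ hy
    have := h1 (fun i => (v i).re)
    linarith
  · have := h2 _ hx
    have := h1 (fun i => (v i).im)
    linarith

lemma negQuadRe {m : Type*} [Fintype m] {M : Matrix m m ℝ} (hM : (-M).PosDef)
    {v : m → ℂ} (hv : v ≠ 0) :
    (star v ⬝ᵥ (M.map Complex.ofReal) *ᵥ v).re < 0 := by
  have h := posQuadRe hM hv
  have hmap : (-M).map Complex.ofReal = -(M.map Complex.ofReal) := by
    ext i j; simp [map_apply]
  rw [hmap] at h
  simp only [neg_mulVec, dotProduct_neg, Complex.neg_re] at h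
  linarith

lemma star_elim {α : Type*} [Star α] {m k : Type*} (a : m → α) (b : k → α) :
    star (Sum.elim a b) = Sum.elim (star a) (star b) := by
  funext i
  rcases i with i | i <;> rfl

lemma sandwich {m k l : Type*} [Fintype m] [Fintype k] [Fintype l]
    (N : Matrix m k ℂ) (Q : Matrix m m ℂ) (M : Matrix m l ℂ) (x : k → ℂ) (y : l → ℂ) :
    star x ⬝ᵥ ((Nᴴ * Q * M) *ᵥ y) = star (N *ᵥ x) ⬝ᵥ (Q *ᵥ (M *ᵥ y)) := by
  rw [← mulVec_mulVec, ← mulVec_mulVec, dotProduct_mulVec, ← star_mulVec]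

lemma brl_map (n : ℕ) (A : Matrix (Fin n) (Fin n) ℝ)
    (B : Matrix (Fin n) (Fin 1) ℝ) (C : Matrix (Fin 1) (Fin n) ℝ) (D γ : ℝ)
    (P : Matrix (Fin n) (Fin n) ℝ) :
    (brlLMI n A B C D γ P).map Complex.ofReal =
      Matrix.fromBlocks
        (Matrix.fromBlocks
          ((A.map Complex.ofReal)ᴴ * P.map Complex.ofReal * A.map Complex.ofReal
            - P.map Complex.ofReal)
          ((A.map Complex.ofReal)ᴴ * P.map Complex.ofReal * B.map Complex.ofReal)
          ((B.map Complex.ofReal)ᴴ * P.map Complex.ofReal * A.map Complex.ofReal)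
          ((-(γ:ℂ)) • 1 + (B.map Complex.ofReal)ᴴ * P.map Complex.ofReal * B.map Complex.ofReal))
        ((Matrix.of (Sum.elim (fun i : Fin n => Cᵀ i)
            (fun _ : Fin 1 => fun _ : Fin 1 => D))).map Complex.ofReal)
        (((Matrix.of (Sum.elim (fun i : Fin n => Cᵀ i)
            (fun _ : Fin 1 => fun _ : Fin 1 => D))).map Complex.ofReal)ᵀ)
        ((-(γ:ℂ)) • 1) := by
  have hsmul : ((-γ) • (1 : Matrix (Fin 1) (Fin 1) ℝ)).map Complex.ofReal
      = (-(γ:ℂ)) • (1 : Matrix (Fin 1) (Fin 1) ℂ) := by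
    ext i j
    simp only [map_apply, Matrix.smul_apply, one_apply, smul_eq_mul]
    split_ifs <;> simp
  have h11 : (Aᵀ * P * A - P).map Complex.ofReal
      = (A.map Complex.ofReal)ᴴ * P.map Complex.ofReal * A.map Complex.ofReal
        - P.map Complex.ofReal := by
    rw [Matrix.map_sub _ (fun a b => Complex.ofReal_sub a b), map_ofReal_mul, map_ofReal_mul,
      conjT_map]
  have h12 : (Aᵀ * P * B).map Complex.ofReal
      = (A.map Complex.ofReal)ᴴ * P.map Complex.ofReal * B.map Complex.ofReal := by
    rw [map_ofReal_mul, map_ofReal_mul, conjT_map]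
  have h21 : (Bᵀ * P * A).map Complex.ofReal
      = (B.map Complex.ofReal)ᴴ * P.map Complex.ofReal * A.map Complex.ofReal := by
    rw [map_ofReal_mul, map_ofReal_mul, conjT_map]
  have h22 : ((-γ) • (1 : Matrix (Fin 1) (Fin 1) ℝ) + Bᵀ * P * B).map Complex.ofReal
      = (-(γ:ℂ)) • 1 + (B.map Complex.ofReal)ᴴ * P.map Complex.ofReal * B.map Complex.ofReal := by
    rw [Matrix.map_add _ (fun a b => Complex.ofReal_add a b), hsmul, map_ofReal_mul,
      map_ofReal_mul, conjT_map]
  rw [brlLMI, fromBlocks_map, fromBlocks_map, h11, h12, h21, h22, hsmul, transpose_map]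

lemma quad_form (n : ℕ) (A : Matrix (Fin n) (Fin n) ℝ) (B : Matrix (Fin n) (Fin 1) ℝ)
    (C : Matrix (Fin 1) (Fin n) ℝ) (D γ : ℝ) (P : Matrix (Fin n) (Fin n) ℝ)
    (v : Fin n → ℂ) (u₀ w₀ : ℂ) :
    star (Sum.elim (Sum.elim v (fun _ : Fin 1 => u₀)) (fun _ : Fin 1 => w₀)) ⬝ᵥ
      ((brlLMI n A B C D γ P).map Complex.ofReal) *ᵥ
      (Sum.elim (Sum.elim v (fun _ : Fin 1 => u₀)) (fun _ : Fin 1 => w₀)) =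
    star (A.map Complex.ofReal *ᵥ v + u₀ • (fun i => (B i 0 : ℂ))) ⬝ᵥ
      (P.map Complex.ofReal *ᵥ (A.map Complex.ofReal *ᵥ v + u₀ • (fun i => (B i 0 : ℂ))))
    - star v ⬝ᵥ (P.map Complex.ofReal *ᵥ v)
    - (γ:ℂ) * (starRingEnd ℂ u₀ * u₀) - (γ:ℂ) * (starRingEnd ℂ w₀ * w₀)
    + starRingEnd ℂ w₀ * ((fun i => (C 0 i : ℂ)) ⬝ᵥ v + D * u₀)
    + starRingEnd ℂ ((fun i => (C 0 i : ℂ)) ⬝ᵥ v + D * u₀) * w₀ := by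
  set A' := A.map Complex.ofReal
  set B' := B.map Complex.ofReal
  set P' := P.map Complex.ofReal
  set b : Fin n → ℂ := fun i => (B i 0 : ℂ) with hbdef
  set c : Fin n → ℂ := fun i => (C 0 i : ℂ) with hcdef
  set u : Fin 1 → ℂ := fun _ => u₀
  set w : Fin 1 → ℂ := fun _ => w₀
  set E := (Matrix.of (Sum.elim (fun i : Fin n => Cᵀ i)
      (fun _ : Fin 1 => fun _ : Fin 1 => D))).map Complex.ofReal with hEdef
  have hb : star b = b := by funext i; simp [hbdef, Complex.conj_ofReal]
  have hc : star c = c := by funext i; simp [hcdef, Complex.conj_ofReal]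
  have hBu : B' *ᵥ u = u₀ • b := by
    funext i
    simp [B', mulVec, dotProduct, u, hbdef, mul_comm]
  have hEw : E *ᵥ w = Sum.elim (w₀ • c) (fun _ : Fin 1 => w₀ * (D:ℂ)) := by
    funext k
    rcases k with i | i <;>
      simp [hEdef, mulVec, dotProduct, w, hcdef, mul_comm]
  have hETx : Eᵀ *ᵥ (Sum.elim v u) = fun _ : Fin 1 => c ⬝ᵥ v + (D:ℂ) * u₀ := by
    funext k
    have hk : k = 0 := Subsingleton.elim k 0
    subst hk
    simp [hEdef, mulVec, dotProduct, Fintype.sum_sum_type, u, hcdef, transpose_apply,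
      map_apply, mul_comm]
  rw [brl_map, fromBlocks_mulVec, Sum.elim_comp_inl, Sum.elim_comp_inr, star_elim,
    sumElim_dotProduct_sumElim,
    dotProduct_add, dotProduct_add, fromBlocks_mulVec, Sum.elim_comp_inl, Sum.elim_comp_inr,
    star_elim, sumElim_dotProduct_sumElim, dotProduct_add, dotProduct_add,
    sub_mulVec, dotProduct_sub, sandwich, sandwich, sandwich,
    add_mulVec, dotProduct_add, sandwich, hBu, hEw, hETx,
    sumElim_dotProduct_sumElim]
  have hsmul1 : ((-(γ:ℂ)) • (1 : Matrix (Fin 1) (Fin 1) ℂ)) *ᵥ u = (-(γ:ℂ)) • u := by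
    rw [smul_mulVec, one_mulVec]
  have hsmul2 : ((-(γ:ℂ)) • (1 : Matrix (Fin 1) (Fin 1) ℂ)) *ᵥ w = (-(γ:ℂ)) • w := by
    rw [smul_mulVec, one_mulVec]
  rw [hsmul1, hsmul2]
  have hcv : starRingEnd ℂ (c ⬝ᵥ v) = star v ⬝ᵥ c := by
    rw [← hc, star_dotProduct_star, hc]
    rfl
  have hud : star u ⬝ᵥ u = starRingEnd ℂ u₀ * u₀ := by
    simp [dotProduct, u, Complex.star_def]
  have hud2 : star u ⬝ᵥ (fun _ : Fin 1 => w₀ * (D:ℂ)) = starRingEnd ℂ u₀ * (w₀ * D) := by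
    simp [dotProduct, u, Complex.star_def]
  have hwd : star w ⬝ᵥ (fun _ : Fin 1 => c ⬝ᵥ v + (D:ℂ) * u₀)
      = starRingEnd ℂ w₀ * (c ⬝ᵥ v + (D:ℂ) * u₀) := by
    simp [dotProduct, w, Complex.star_def]
  have hwd2 : star w ⬝ᵥ w = starRingEnd ℂ w₀ * w₀ := by
    simp [dotProduct, w, Complex.star_def]
  rw [dotProduct_smul, dotProduct_smul, dotProduct_smul, hud, hwd2, hud2, hwd]
  simp only [star_add, star_smul, hb, mulVec_add, mulVec_smul, add_dotProduct, dotProduct_add,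
    smul_dotProduct, dotProduct_smul, smul_eq_mul, _root_.map_add, _root_.map_mul, hcv,
    Complex.conj_ofReal, Complex.star_def]
  ring

lemma smul_quad {n : ℕ} (t : ℂ) (P : Matrix (Fin n) (Fin n) ℂ) (x : Fin n → ℂ) :
    star (t • x) ⬝ᵥ (P *ᵥ (t • x)) = (Complex.normSq t : ℂ) * (star x ⬝ᵥ (P *ᵥ x)) := by
  rw [star_smul, smul_dotProduct, mulVec_smul, dotProduct_smul, smul_eq_mul, smul_eq_mul,
    ← mul_assoc]
  congr 1
  rw [Complex.star_def, mul_comm, Complex.mul_conj]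

lemma scalar_id (γ a : ℝ) (hγ' : (γ:ℂ) ≠ 0) (β g : ℂ)
    (hgg : starRingEnd ℂ g * g = ((a : ℝ) : ℂ)) :
    β - β - (γ:ℂ) * (starRingEnd ℂ 1 * 1)
      - (γ:ℂ) * (starRingEnd ℂ (g / (γ:ℂ)) * (g / (γ:ℂ)))
      + starRingEnd ℂ (g / (γ:ℂ)) * g + starRingEnd ℂ g * (g / (γ:ℂ))
      = ((a / γ - γ : ℝ) : ℂ) := by
  rw [map_div₀, Complex.conj_ofReal, _root_.map_one]
  push_cast
  field_simp
  linear_combination hgg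

/-- Discrete-time bounded real lemma (sufficiency): if `P ≻ 0` and the LMI is negative
definite, then `A` is Schur stable and the transfer function
`G(z) = C(zI - A)⁻¹B + D` satisfies `|G(e^{iθ})| < γ` on the unit circle. -/
theorem stmt16 (n : ℕ) (A : Matrix (Fin n) (Fin n) ℝ) (B : Matrix (Fin n) (Fin 1) ℝ)
    (C : Matrix (Fin 1) (Fin n) ℝ) (D : ℝ) (γ : ℝ) (hγ : 0 < γ)
    (P : Matrix (Fin n) (Fin n) ℝ) (hP : P.PosDef)
    (hLMI : (-(brlLMI n A B C D γ P)).PosDef) :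
    (∀ μ ∈ spectrum ℂ (A.map Complex.ofReal), ‖μ‖ < 1) ∧
    ∀ θ : ℝ,
      ‖(((C.map Complex.ofReal) *
            (Complex.exp (θ * Complex.I) • (1 : Matrix (Fin n) (Fin n) ℂ) -
              A.map Complex.ofReal)⁻¹ * (B.map Complex.ofReal)) 0 0 + (D : ℂ))‖ < γ := by
  have key : ∀ (μ : ℂ) (v : Fin n → ℂ), v ≠ 0 →
      (A.map Complex.ofReal) *ᵥ v = μ • v → ‖μ‖ < 1 := by
    intro μ v hv hAv
    have hξ : (Sum.elim (Sum.elim v (fun _ : Fin 1 => (0:ℂ))) (fun _ : Fin 1 => (0:ℂ)))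
        ≠ 0 := by
      intro h
      exact hv (funext fun i => congrFun h (Sum.inl (Sum.inl i)))
    have hneg := negQuadRe hLMI hξ
    rw [quad_form] at hneg
    simp only [zero_smul, add_zero, map_zero, mul_zero, zero_mul, sub_zero] at hneg
    rw [hAv, smul_quad] at hneg
    have hβ : 0 < (star v ⬝ᵥ (P.map Complex.ofReal *ᵥ v)).re := posQuadRe hP hv
    rw [Complex.sub_re, Complex.re_ofReal_mul, Complex.normSq_eq_norm_sq] at hneg
    by_contra hcon
    push_neg at hcon
    have h1 : 1 ≤ ‖μ‖ ^ 2 := by nlinarith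
    nlinarith [mul_le_mul_of_nonneg_right h1 hβ.le]
  refine ⟨?_, ?_⟩
  · intro μ hμ
    rw [spectrum.mem_iff] at hμ
    have hdet : ((algebraMap ℂ (Matrix (Fin n) (Fin n) ℂ)) μ - A.map Complex.ofReal).det
        = 0 := by
      by_contra hd
      exact hμ ((isUnit_iff_isUnit_det _).mpr (isUnit_iff_ne_zero.mpr hd))
    obtain ⟨v, hv, hveq⟩ := (Matrix.exists_mulVec_eq_zero_iff).mpr hdet
    apply key μ v hv
    rw [Algebra.algebraMap_eq_smul_one, sub_mulVec, smul_mulVec, one_mulVec,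
      sub_eq_zero] at hveq
    exact hveq.symm
  · intro θ
    set z := Complex.exp (θ * Complex.I) with hzdef
    have hz : ‖z‖ = 1 := Complex.norm_exp_ofReal_mul_I θ
    have hdet : (z • (1 : Matrix (Fin n) (Fin n) ℂ) - A.map Complex.ofReal).det ≠ 0 := by
      intro hd
      obtain ⟨v, hv, hveq⟩ := (Matrix.exists_mulVec_eq_zero_iff).mpr hd
      rw [sub_mulVec, smul_mulVec, one_mulVec, sub_eq_zero] at hveq
      have := key z v hv hveq.symm
      rw [hz] at this
      exact lt_irrefl 1 this
    have hMinv : (z • (1 : Matrix (Fin n) (Fin n) ℂ) - A.map Complex.ofReal) *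
        (z • (1 : Matrix (Fin n) (Fin n) ℂ) - A.map Complex.ofReal)⁻¹ = 1 :=
      mul_nonsing_inv _ (isUnit_iff_ne_zero.mpr hdet)
    set x : Fin n → ℂ :=
      (z • (1 : Matrix (Fin n) (Fin n) ℂ) - A.map Complex.ofReal)⁻¹ *ᵥ
        (fun i => (B i 0 : ℂ)) with hxdef
    have hx : (z • (1 : Matrix (Fin n) (Fin n) ℂ) - A.map Complex.ofReal) *ᵥ x
        = fun i => (B i 0 : ℂ) := by
      rw [hxdef, mulVec_mulVec, hMinv, one_mulVec]
    have hAx : A.map Complex.ofReal *ᵥ x + (1:ℂ) • (fun i => (B i 0 : ℂ)) = z • x := by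
      rw [sub_mulVec, smul_mulVec, one_mulVec] at hx
      rw [one_smul, ← hx, add_comm, sub_add_cancel]
    have hval : ((C.map Complex.ofReal) *
        (z • (1 : Matrix (Fin n) (Fin n) ℂ) - A.map Complex.ofReal)⁻¹ *
        (B.map Complex.ofReal)) 0 0 = (fun i => (C 0 i : ℂ)) ⬝ᵥ x := by
      simp only [mul_apply, map_apply, dotProduct, mulVec, hxdef, Finset.sum_mul,
        Finset.mul_sum]
      rw [Finset.sum_comm]
      refine Finset.sum_congr rfl fun j _ => ?_
      refine Finset.sum_congr rfl fun i _ => ?_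
      ring
    set g : ℂ := (fun i => (C 0 i : ℂ)) ⬝ᵥ x + (D:ℂ) with hgdef
    have hξ : Sum.elim (Sum.elim x (fun _ : Fin 1 => (1:ℂ))) (fun _ : Fin 1 => g / γ)
        ≠ 0 := by
      intro h
      have h1 := congrFun h (Sum.inl (Sum.inr 0))
      simp only [Sum.elim_inl, Sum.elim_inr, Pi.zero_apply] at h1
      exact one_ne_zero h1
    have hneg := negQuadRe hLMI hξ
    rw [quad_form, hAx, smul_quad, Complex.normSq_eq_norm_sq, hz] at hneg
    rw [one_pow, Complex.ofReal_one, one_mul] at hneg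
    have hγ' : (γ:ℂ) ≠ 0 := Complex.ofReal_ne_zero.mpr hγ.ne'
    have hgg : starRingEnd ℂ g * g = ((‖g‖ ^ 2 : ℝ) : ℂ) := by
      rw [mul_comm, Complex.mul_conj, Complex.sq_norm]
    have hval2 : (fun i => (C 0 i : ℂ)) ⬝ᵥ x + (D:ℂ) * 1 = g := by rw [hgdef]; ring
    rw [hval2] at hneg
    rw [scalar_id γ (‖g‖ ^ 2) hγ' _ g hgg, Complex.ofReal_re] at hneg
    have h2 : ‖g‖ ^ 2 < γ ^ 2 := by
      have h3 : ‖g‖ ^ 2 / γ < γ := by linarith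
      have h4 := (div_lt_iff₀ hγ).mp h3
      nlinarith
    rw [hval, ← hgdef]
    nlinarith [norm_nonneg g]
end

section
/- If P ≻ 0 and AᵀPA - P ≺ 0 for real square matrices A, P, then the spectral radius of A is strictly less than 1. -/
open Matrix

lemma re_quad (n : ℕ) (M : Matrix (Fin n) (Fin n) ℝ)
    (hM : ∀ y : Fin n → ℝ, y ≠ 0 → 0 < y ⬝ᵥ M *ᵥ y)
    (x : Fin n → ℂ) (hx : x ≠ 0) :
    0 < (star x ⬝ᵥ (M.map Complex.ofReal) *ᵥ x).re := by
  set a : Fin n → ℝ := fun i => (x i).re with ha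
  set b : Fin n → ℝ := fun i => (x i).im with hb
  have key : (star x ⬝ᵥ (M.map Complex.ofReal) *ᵥ x).re = a ⬝ᵥ M *ᵥ a + b ⬝ᵥ M *ᵥ b := by
    simp only [dotProduct, mulVec, Pi.star_apply, map_apply, Complex.re_sum,
      Finset.mul_sum, ← Finset.sum_add_distrib]
    refine Finset.sum_congr rfl fun i _ => ?_
    refine Finset.sum_congr rfl fun j _ => ?_
    simp [Complex.mul_re, Complex.mul_im, a, b]
  rw [key]
  rcases eq_or_ne a 0 with h1 | h1
  · have h2 : b ≠ 0 := by
      intro h2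
      apply hx
      funext i
      have := congrFun h1 i
      have := congrFun h2 i
      simp [a, b] at *
      exact Complex.ext ‹_› ‹_›
    have := hM b h2
    simp [h1]
    linarith [this]
  · have := hM a h1
    rcases eq_or_ne b 0 with h2 | h2
    · simp [h2]; linarith
    · have := hM b h2; linarith

/-- Discrete-time Lyapunov stability: if `P ≻ 0` and `AᵀPA - P ≺ 0`, then every
(complex) eigenvalue of `A` has modulus less than one. -/
theorem stmt17 (n : ℕ) (A P : Matrix (Fin n) (Fin n) ℝ)
    (hP : P.PosDef) (hL : (-(Aᵀ * P * A - P)).PosDef) :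
    ∀ μ ∈ spectrum ℂ (A.map (Complex.ofReal)), ‖μ‖ < 1 := by
  intro μ hμ
  set Ac := A.map Complex.ofReal with hAc
  set Pc := P.map Complex.ofReal with hPc
  rw [spectrum.mem_iff] at hμ
  have hdet : (algebraMap ℂ (Matrix (Fin n) (Fin n) ℂ) μ - Ac).det = 0 := by
    by_contra h
    exact hμ ((Matrix.isUnit_iff_isUnit_det _).2 (isUnit_iff_ne_zero.2 h))
  obtain ⟨v, hv0, hv⟩ := (Matrix.exists_mulVec_eq_zero_iff).2 hdet
  have heig : Ac *ᵥ v = μ • v := by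
    rw [sub_mulVec] at hv
    have h1 : (algebraMap ℂ (Matrix (Fin n) (Fin n) ℂ) μ) *ᵥ v = μ • v := by
      simp [Matrix.algebraMap_eq_diagonal, mulVec_diagonal]
      funext i; simp [mulVec_diagonal]
    rw [h1] at hv
    linear_combination (norm := module) -hv
  have hstar : Ac *ᵥ star v = star (Ac *ᵥ v) := by
    funext i
    simp [hAc, mulVec, dotProduct, map_sum, Complex.conj_ofReal]
  have hN : ∀ y : Fin n → ℝ, y ≠ 0 → 0 < y ⬝ᵥ (-(Aᵀ * P * A - P)) *ᵥ y := fun y hy => by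
    simpa using hL.dotProduct_mulVec_pos hy
  have hPq : ∀ y : Fin n → ℝ, y ≠ 0 → 0 < y ⬝ᵥ P *ᵥ y := fun y hy => by
    simpa using hP.dotProduct_mulVec_pos hy
  have h1 := re_quad n _ hN v hv0
  have h2 := re_quad n _ hPq v hv0
  rw [← hPc] at h2
  have hmap : (-(Aᵀ * P * A - P)).map Complex.ofReal = Pc - Acᵀ * Pc * Ac := by
    have hm : ∀ M : Matrix (Fin n) (Fin n) ℝ,
        M.map Complex.ofReal = Complex.ofRealHom.mapMatrix M := fun M => rfl
    simp only [hm, hAc, hPc]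
    simp only [map_neg, map_sub, _root_.map_mul, neg_sub, RingHom.mapMatrix_apply,
      ← Matrix.transpose_map]

  rw [hmap] at h1
  set q : ℂ := star v ⬝ᵥ Pc *ᵥ v with hq
  have hterm : star v ⬝ᵥ (Acᵀ * Pc * Ac) *ᵥ v = (Complex.normSq μ : ℂ) * q := by
    rw [mul_assoc, ← mulVec_mulVec, dotProduct_mulVec, vecMul_transpose, hstar, heig,
      ← mulVec_mulVec, heig]
    rw [star_smul, smul_dotProduct, mulVec_smul, dotProduct_smul, ← hq]
    simp only [smul_eq_mul, RCLike.star_def]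
    rw [← mul_assoc, mul_comm (starRingEnd ℂ μ) μ, Complex.mul_conj]
  rw [sub_mulVec, dotProduct_sub, hterm, ← hq, Complex.sub_re, Complex.re_ofReal_mul] at h1
  have habs : Complex.normSq μ < 1 := by nlinarith
  nlinarith [norm_nonneg μ, Complex.sq_norm μ]
end
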